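/- arXiv:2202.11464 — 5 statements merged into one kernel-verified Lean document; each statement's English description precedes it below -/
import Mathlib

section
/- Let l ≥ 1 and k ≥ l be natural numbers and μ > 0. Let Y₁,…,Y_l be i.i.d. exponential random variables with rate μ, let Z₁,…,Z_{k−l} be i.i.d. exponential random variables with rate lμ, and let all of these be mutually independent. Define the tiny-tasks split-merge job service time Δ = max_{i∈[1,l]} Y_i + Σ_{j=1}^{k−l} Z_j. Then for every θ ∈ (0, μ), the moment generating function of Δ satisfies E[e^{θΔ}] = (lμ/(lμ−θ))^{k−l} · ∏_{i=1}^{l} iμ/(iμ−θ). -/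
open MeasureTheory ProbabilityTheory Real Finset
open scoped ENNReal NNReal

section Aux

open Set Filter Topology

lemma tiny_cont (a b : ℝ) (n : ℕ) :
    Continuous (fun x : ℝ => exp (-(a*x)) * (1 - exp (-(b*x)))^n) := by fun_prop

lemma tiny_integrableOn {a b : ℝ} (ha : 0 < a) (hb : 0 < b) (n : ℕ) :
    IntegrableOn (fun x : ℝ => exp (-(a*x)) * (1 - exp (-(b*x)))^n) (Ioi 0) := by
  refine Integrable.mono (exp_neg_integrableOn_Ioi 0 ha)
    ((tiny_cont a b n).aestronglyMeasurable.restrict) ?_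
  filter_upwards [ae_restrict_mem measurableSet_Ioi] with x hx
  rw [Real.norm_eq_abs, Real.norm_eq_abs, abs_exp, abs_mul, abs_exp, abs_pow, neg_mul]
  have hx0 : (0:ℝ) < x := hx
  have h2 : exp (-(b*x)) ≤ 1 := exp_le_one_iff.2 (by nlinarith)
  have h3 : (0:ℝ) < exp (-(b*x)) := exp_pos _
  have h1 : |1 - exp (-(b*x))| ≤ 1 := abs_le.2 ⟨by linarith, by linarith⟩
  have h4 : |1 - exp (-(b*x))| ^ n ≤ 1 := pow_le_one₀ (abs_nonneg _) h1 (n := n)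
  nlinarith [exp_pos (-(a*x)), pow_nonneg (abs_nonneg (1 - exp (-(b*x)))) n]

lemma tiny_exp_tendsto {c : ℝ} (hc : 0 < c) :
    Tendsto (fun x : ℝ => exp (-(c*x))) atTop (𝓝 0) := by
  have h1 : Tendsto (fun x : ℝ => -(c*x)) atTop atBot :=
    tendsto_neg_atTop_atBot.comp (Tendsto.const_mul_atTop hc tendsto_id)
  exact Real.tendsto_exp_atBot.comp h1

lemma tiny_tendsto {a b : ℝ} (ha : 0 < a) (hb : 0 < b) (n : ℕ) :
    Tendsto (fun x : ℝ => exp (-(a*x)) * (1 - exp (-(b*x)))^n) atTop (𝓝 0) := by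
  have hA := tiny_exp_tendsto ha
  have hB : Tendsto (fun x : ℝ => (1 - exp (-(b*x)))^n) atTop (𝓝 1) := by
    have h2 : Tendsto (fun x : ℝ => 1 - exp (-(b*x))) atTop (𝓝 1) := by
      simpa using tendsto_const_nhds.sub (tiny_exp_tendsto hb)
    simpa using h2.pow n
  simpa using hA.mul hB

lemma tiny_deriv (a b : ℝ) (n : ℕ) (x : ℝ) :
    HasDerivAt (fun x : ℝ => exp (-(a*x)) * (1 - exp (-(b*x)))^(n+1))
      (-(a * (exp (-(a*x)) * (1 - exp (-(b*x)))^(n+1)))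
        + ((n:ℝ)+1) * b * (exp (-((a+b)*x)) * (1 - exp (-(b*x)))^n)) x := by
  have h1 : HasDerivAt (fun x : ℝ => exp (-(a*x))) (-a * exp (-(a*x))) x := by
    have := ((hasDerivAt_id x).const_mul (-a)).exp
    simpa [neg_mul, mul_comm] using this
  have h2 : HasDerivAt (fun x : ℝ => 1 - exp (-(b*x))) (b * exp (-(b*x))) x := by
    have := ((hasDerivAt_id x).const_mul (-b)).exp
    have h := this.const_sub (1:ℝ)
    simpa [neg_mul, mul_comm] using h
  have h3 := h2.pow (n+1)
  have h4 := h1.mul h3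
  refine h4.congr_deriv ?_
  have he : exp (-((a+b)*x)) = exp (-(a*x)) * exp (-(b*x)) := by
    rw [← exp_add]; ring_nf
  rw [he]
  simp only [Pi.pow_apply]
  push_cast
  ring

lemma tiny_I (b : ℝ) (hb : 0 < b) :
    ∀ (n : ℕ) (a : ℝ), 0 < a →
      ∫ x in Ioi (0:ℝ), exp (-(a*x)) * (1 - exp (-(b*x)))^n
        = (∏ j ∈ Finset.range n, (((j:ℝ)+1) * b)) / ∏ j ∈ Finset.range (n+1), (a + j*b) := by
  intro n
  induction n with
  | zero =>
    intro a ha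
    simp only [pow_zero, mul_one, Finset.prod_range_zero, Finset.prod_range_one,
      Nat.cast_zero, zero_mul, add_zero]
    have hF : ∀ x ∈ Ici (0:ℝ), HasDerivAt (fun x => -exp (-(a*x)) / a) (exp (-(a*x))) x := by
      intro x _
      have h1 : HasDerivAt (fun x : ℝ => exp (-(a*x))) (-a * exp (-(a*x))) x := by
        have := ((hasDerivAt_id x).const_mul (-a)).exp
        simpa [neg_mul, mul_comm] using this
      have h2 := (h1.neg).div_const a
      refine h2.congr_deriv ?_
      field_simp
    have hint : IntegrableOn (fun x : ℝ => exp (-(a*x))) (Ioi 0) := by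
      have := tiny_integrableOn ha hb 0
      simpa using this
    have htend : Tendsto (fun x : ℝ => -exp (-(a*x)) / a) atTop (𝓝 0) := by
      have := (tiny_exp_tendsto ha).neg.div_const a
      simpa using this
    have hval := integral_Ioi_of_hasDerivAt_of_tendsto' hF hint htend
    rw [hval]
    simp
    field_simp
  | succ n ih =>
    intro a ha
    have hab : 0 < a + b := by linarith
    have hG : ∀ x ∈ Ici (0:ℝ),
        HasDerivAt (fun x : ℝ => exp (-(a*x)) * (1 - exp (-(b*x)))^(n+1))
          ((fun x : ℝ => -(a * (exp (-(a*x)) * (1 - exp (-(b*x)))^(n+1)))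
            + ((n:ℝ)+1) * b * (exp (-((a+b)*x)) * (1 - exp (-(b*x)))^n)) x) x :=
      fun x _ => tiny_deriv a b n x
    have hint1 : IntegrableOn
        (fun x : ℝ => -(a * (exp (-(a*x)) * (1 - exp (-(b*x)))^(n+1)))) (Ioi 0) :=
      ((tiny_integrableOn ha hb (n+1)).const_mul a).neg
    have hint2 : IntegrableOn
        (fun x : ℝ => ((n:ℝ)+1) * b * (exp (-((a+b)*x)) * (1 - exp (-(b*x)))^n)) (Ioi 0) :=
      (tiny_integrableOn hab hb n).const_mul _
    have hval := integral_Ioi_of_hasDerivAt_of_tendsto' hG (hint1.add hint2)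
      (tiny_tendsto ha hb (n+1))
    rw [integral_add hint1 hint2, integral_neg, integral_const_mul, integral_const_mul] at hval
    have h0 : exp (-(a*(0:ℝ))) * (1 - exp (-(b*(0:ℝ))))^(n+1) = 0 := by simp
    rw [h0] at hval
    rw [ih (a+b) hab] at hval
    -- hval : -(a * ∫) + ((n+1)*b) * (A/D) = 0 - 0
    set I := ∫ x in Ioi (0:ℝ), exp (-(a*x)) * (1 - exp (-(b*x)))^(n+1) with hI
    set A := ∏ j ∈ Finset.range n, (((j:ℝ)+1) * b) with hA
    set D := ∏ j ∈ Finset.range (n+1), (a + b + (j:ℝ)*b) with hD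
    have hDpos : 0 < D := Finset.prod_pos (fun j _ => by positivity)
    have hnum : ∏ j ∈ Finset.range (n+1), (((j:ℝ)+1) * b) = A * (((n:ℝ)+1) * b) := by
      rw [Finset.prod_range_succ]
    have hden : ∏ j ∈ Finset.range (n+2), (a + (j:ℝ)*b) = D * a := by
      rw [Finset.prod_range_succ' (fun j => (a + (j:ℝ)*b)) (n+1)]
      simp only [Nat.cast_zero, zero_mul, add_zero, Nat.cast_add, Nat.cast_one]
      congr 1
      apply Finset.prod_congr rfl
      intro j _
      push_cast
      ring
    rw [hnum, hden]
    have ha' : a ≠ 0 := ne_of_gt ha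
    have hD' : D ≠ 0 := ne_of_gt hDpos
    field_simp at hval ⊢
    linarith [hval]

lemma tiny_expPDFReal (r x : ℝ) :
    exponentialPDFReal r x = if 0 ≤ x then r * exp (-(r * x)) else 0 := by
  rw [exponentialPDFReal, gammaPDFReal]
  simp only [rpow_one, Real.Gamma_one, div_one, sub_self, rpow_zero, mul_one]

lemma tiny_expMeasure_eq (r : ℝ) :
    expMeasure r = (volume : Measure ℝ).withDensity
      (fun x => (Real.toNNReal (exponentialPDFReal r x) : ℝ≥0∞)) := rfl

lemma tiny_integral_expMeasure (r : ℝ) (hr : 0 < r) (g : ℝ → ℝ) :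
    ∫ x, g x ∂(expMeasure r) = ∫ x in Ioi 0, (r * exp (-(r*x))) * g x := by
  rw [tiny_expMeasure_eq,
    integral_withDensity_eq_integral_smul ((measurable_exponentialPDFReal r).real_toNNReal) g]
  have h1 : ∀ x : ℝ, Real.toNNReal (exponentialPDFReal r x) • g x
      = Set.indicator (Ici 0) (fun x => (r * exp (-(r*x))) * g x) x := by
    intro x
    rw [NNReal.smul_def, smul_eq_mul,
      Real.coe_toNNReal _ (exponentialPDFReal_nonneg hr x), tiny_expPDFReal]
    by_cases hx : (0:ℝ) ≤ x
    · rw [if_pos hx]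
      exact (Set.indicator_of_mem (show x ∈ Set.Ici 0 from hx)
        (fun x => r * exp (-(r*x)) * g x)).symm
    · rw [if_neg hx, zero_mul]
      exact (Set.indicator_of_notMem (show x ∉ Set.Ici 0 by simpa using hx)
        (fun x => r * exp (-(r*x)) * g x)).symm
  rw [integral_congr_ae (Filter.Eventually.of_forall h1), integral_indicator measurableSet_Ici,
    integral_Ici_eq_integral_Ioi]

lemma tiny_mgf_exp {Ω : Type*} [MeasurableSpace Ω] (P : Measure Ω) (X : Ω → ℝ)
    (hX : Measurable X) (r θ : ℝ) (hr : 0 < r) (hθ : θ < r)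
    (hlaw : Measure.map X P = expMeasure r) :
    mgf X P θ = r / (r - θ) := by
  have h1 : mgf X P θ = ∫ x, exp (θ * x) ∂(expMeasure r) := by
    rw [mgf, ← hlaw]
    exact (integral_map hX.aemeasurable
      (Measurable.aestronglyMeasurable (by fun_prop : Measurable (fun x : ℝ => exp (θ * x))))).symm
  rw [h1, tiny_integral_expMeasure r hr]
  have h2 : Set.EqOn (fun x => (r * exp (-(r*x))) * exp (θ * x))
      (fun x => r * (exp (-((r-θ)*x)) * (1 - exp (-(1*x)))^0)) (Ioi 0) := by
    intro x _
    show r * exp (-(r*x)) * exp (θ * x) = r * (exp (-((r-θ)*x)) * (1 - exp (-(1*x)))^0)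
    rw [pow_zero, mul_one, mul_assoc, ← exp_add, show -(r*x) + θ*x = -((r-θ)*x) by ring]
  rw [setIntegral_congr_fun measurableSet_Ioi h2, integral_const_mul,
    tiny_I 1 one_pos 0 (r-θ) (by linarith)]
  simp
  rw [div_eq_mul_inv]

lemma tiny_deriv2 (c : ℝ) (m : ℕ) (x : ℝ) :
    HasDerivAt (fun x : ℝ => (1 - exp (-(c*x)))^(m+1))
      (((m:ℝ)+1) * c * exp (-(c*x)) * (1 - exp (-(c*x)))^m) x := by
  have h2 : HasDerivAt (fun x : ℝ => 1 - exp (-(c*x))) (c * exp (-(c*x))) x := by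
    have := ((hasDerivAt_id x).const_mul (-c)).exp
    have h := this.const_sub (1:ℝ)
    simpa [neg_mul, mul_comm] using h
  have h3 := h2.pow (m+1)
  refine h3.congr_deriv ?_
  push_cast
  ring

lemma tiny_maxdensity_Iic (c : ℝ) (hc : 0 < c) (m : ℕ) (t : ℝ) :
    ∫ x in Iic t, Set.indicator (Ici 0)
        (fun x => ((m:ℝ)+1) * c * exp (-(c*x)) * (1 - exp (-(c*x)))^m) x
      = if 0 ≤ t then (1 - exp (-(c*t)))^(m+1) else 0 := by
  rw [setIntegral_indicator measurableSet_Ici]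
  have hset : Iic t ∩ Ici 0 = Icc 0 t := by rw [Set.inter_comm, Set.Ici_inter_Iic]
  rw [hset]
  split_ifs with h
  · rw [integral_Icc_eq_integral_Ioc, ← intervalIntegral.integral_of_le h]
    have hcont : Continuous (fun x : ℝ => ((m:ℝ)+1) * c * exp (-(c*x)) * (1 - exp (-(c*x)))^m) :=
      by fun_prop
    rw [intervalIntegral.integral_eq_sub_of_hasDerivAt
      (fun x _ => tiny_deriv2 c m x) (hcont.intervalIntegrable 0 t)]
    simp
  · rw [Set.Icc_eq_empty (by linarith), Measure.restrict_empty, integral_zero_measure]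

lemma tiny_meas_iSup {ι δ : Type*} [Fintype ι] [Nonempty ι] [MeasurableSpace δ]
    {f : ι → δ → ℝ} (hf : ∀ i, Measurable (f i)) : Measurable (fun a => ⨆ i, f i a) := by
  have h1 : (fun a => ⨆ i, f i a) = Finset.univ.sup' Finset.univ_nonempty f := by
    funext a
    rw [← Finset.sup'_univ_eq_ciSup]
    exact (Finset.sup'_apply _ _ _).symm
  rw [h1]
  exact Finset.measurable_sup' _ (fun i _ => hf i)

end Aux

/-- MGF of the tiny-tasks split-merge job service time
`Δ = max_{i∈[1,l]} Y_i + Σ_{j=1}^{k−l} Z_j`, where the `Y_i` are i.i.d. `Exp(μ)`,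
the `Z_j` are i.i.d. `Exp(lμ)`, and all are mutually independent:
for `θ ∈ (0, μ)`, `E[e^{θΔ}] = (lμ/(lμ−θ))^{k−l} · ∏_{i=1}^{l} iμ/(iμ−θ)`. -/
theorem tiny_tasks_split_merge_mgf
    {Ω : Type*} [MeasurableSpace Ω] (P : Measure Ω) [IsProbabilityMeasure P]
    (l k : ℕ) (hl : 1 ≤ l) (hlk : l ≤ k) (μ : ℝ) (hμ : 0 < μ)
    (Y : Fin l → Ω → ℝ) (Z : Fin (k - l) → Ω → ℝ)
    (hYmeas : ∀ i, Measurable (Y i)) (hZmeas : ∀ j, Measurable (Z j))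
    (hYlaw : ∀ i, Measure.map (Y i) P = expMeasure μ)
    (hZlaw : ∀ j, Measure.map (Z j) P = expMeasure (l * μ))
    (hindep : iIndepFun (Sum.elim Y Z) P)
    (Δ : Ω → ℝ) (hΔ : ∀ ω, Δ ω = (⨆ i, Y i ω) + ∑ j, Z j ω)
    (θ : ℝ) (hθ : θ ∈ Set.Ioo 0 μ) :
    mgf Δ P θ =
      (l * μ / (l * μ - θ)) ^ (k - l) *
        ∏ i ∈ Finset.Icc 1 l, ((i : ℝ) * μ / ((i : ℝ) * μ - θ)) := by
  obtain ⟨hθ0, hθμ⟩ := hθ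
  haveI hNE : Nonempty (Fin l) := ⟨⟨0, hl⟩⟩
  set m : ℕ := l - 1 with hm
  have hlm : l = m + 1 := by omega
  have hmeas : ∀ i, Measurable (Sum.elim Y Z i) := by
    rintro (i|j); exacts [hYmeas i, hZmeas j]
  set M : Ω → ℝ := fun ω => ⨆ i, Y i ω with hM
  have hMmeas : Measurable M := tiny_meas_iSup hYmeas
  set S : Ω → ℝ := ∑ j, Z j with hS
  have hSapp : ∀ ω, S ω = ∑ j, Z j ω := fun ω => by rw [hS]; exact Finset.sum_apply _ _ _
  have hSmeas : Measurable S := by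
    rw [show S = fun ω => ∑ j, Z j ω from funext hSapp]
    exact Finset.measurable_sum _ (fun j _ => hZmeas j)
  have hΔ' : Δ = M + S := by
    funext ω; rw [hΔ ω, Pi.add_apply, hSapp ω]
  -- independence of M and S
  have hindepMS : IndepFun M S P := by
    have h := hindep.indepFun_finset (Finset.univ.image Sum.inl) (Finset.univ.image Sum.inr)
      (by simp [Finset.disjoint_left]) hmeas
    have hφ : Measurable (fun v : (↥(Finset.univ.image (Sum.inl : Fin l → Fin l ⊕ Fin (k-l))) → ℝ)
        => ⨆ i : Fin l, v ⟨Sum.inl i, by simp⟩) :=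
      tiny_meas_iSup (fun i => measurable_pi_apply _)
    have hψ : Measurable (fun v : (↥(Finset.univ.image (Sum.inr : Fin (k-l) → Fin l ⊕ Fin (k-l))) → ℝ)
        => ∑ j : Fin (k-l), v ⟨Sum.inr j, by simp⟩) :=
      Finset.measurable_sum _ (fun j _ => measurable_pi_apply _)
    have h2 := h.comp hφ hψ
    have e2 : S = (fun v : (↥(Finset.univ.image (Sum.inr : Fin (k-l) → Fin l ⊕ Fin (k-l))) → ℝ)
        => ∑ j : Fin (k-l), v ⟨Sum.inr j, by simp⟩)
        ∘ (fun a (i : ↥(Finset.univ.image (Sum.inr : Fin (k-l) → Fin l ⊕ Fin (k-l))))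
          => Sum.elim Y Z i a) := by
      funext ω
      rw [hSapp ω]
      rfl
    rw [e2]
    exact h2
  -- CDF of M
  have hexpIic : ∀ t : ℝ, expMeasure μ (Set.Iic t)
      = ENNReal.ofReal (if 0 ≤ t then 1 - exp (-(μ*t)) else 0) := by
    intro t
    rw [expMeasure, gammaMeasure, withDensity_apply _ measurableSet_Iic]
    exact lintegral_exponentialPDF_eq_antiDeriv hμ t
  have hCDF : ∀ t : ℝ, P.map M (Set.Iic t)
      = (ENNReal.ofReal (if 0 ≤ t then 1 - exp (-(μ*t)) else 0))^l := by
    intro t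
    rw [Measure.map_apply hMmeas measurableSet_Iic]
    have hpre : M ⁻¹' Set.Iic t = ⋂ i, Y i ⁻¹' Set.Iic t := by
      ext ω
      simp only [Set.mem_preimage, Set.mem_Iic, Set.mem_iInter, hM]
      exact ciSup_le_iff (Set.Finite.bddAbove (Set.finite_range _))
    have key := hindep.measure_inter_preimage_eq_mul
      (Finset.univ.image (Sum.inl : Fin l → Fin l ⊕ Fin (k-l)))
      (sets := Sum.elim (fun _ : Fin l => Set.Iic t) (fun _ : Fin (k-l) => Set.univ))
      (fun i _ => by rcases i with i|j; exacts [measurableSet_Iic, MeasurableSet.univ])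
    have hinj : ∀ x ∈ Finset.univ, ∀ y ∈ Finset.univ,
        (Sum.inl : Fin l → Fin l ⊕ Fin (k-l)) x = Sum.inl y → x = y :=
      fun x _ y _ h => Sum.inl.inj h
    have h1 : (⋂ i ∈ Finset.univ.image (Sum.inl : Fin l → Fin l ⊕ Fin (k-l)),
        Sum.elim Y Z i ⁻¹' (Sum.elim (fun _ : Fin l => Set.Iic t)
          (fun _ : Fin (k-l) => Set.univ) i)) = ⋂ i, Y i ⁻¹' Set.Iic t := by
      ext ω
      simp
    rw [h1, Finset.prod_image hinj] at key
    rw [hpre, key]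
    have h2 : ∀ i : Fin l, P (Sum.elim Y Z (Sum.inl i) ⁻¹'
        (Sum.elim (fun _ : Fin l => Set.Iic t) (fun _ : Fin (k-l) => Set.univ) (Sum.inl i)))
        = ENNReal.ofReal (if 0 ≤ t then 1 - exp (-(μ*t)) else 0) := by
      intro i
      have : Sum.elim Y Z (Sum.inl i) ⁻¹'
          (Sum.elim (fun _ : Fin l => Set.Iic t) (fun _ : Fin (k-l) => Set.univ) (Sum.inl i))
          = Y i ⁻¹' Set.Iic t := rfl
      rw [this, ← Measure.map_apply (hYmeas i) measurableSet_Iic, hYlaw i, hexpIic t]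
    rw [Finset.prod_congr rfl (fun i _ => h2 i), Finset.prod_const, Finset.card_univ,
      Fintype.card_fin]
  -- density of M
  set g : ℝ → ℝ := fun x => ((m:ℝ)+1) * μ * exp (-(μ*x)) * (1 - exp (-(μ*x)))^m with hg
  set dens : ℝ → ℝ := Set.indicator (Set.Ici 0) g with hdens
  set D : Measure ℝ := volume.withDensity (fun x => ENNReal.ofReal (dens x)) with hD
  have hgcont : Continuous g := by rw [hg]; fun_prop
  have hdens_meas : Measurable dens := hgcont.measurable.indicator measurableSet_Ici
  have hdens_nonneg : ∀ x, 0 ≤ dens x := by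
    intro x
    apply Set.indicator_nonneg
    intro y hy
    have hy0 : (0:ℝ) ≤ y := hy
    have h1 : exp (-(μ*y)) ≤ 1 := exp_le_one_iff.2 (by nlinarith)
    have h2 : (0:ℝ) ≤ 1 - exp (-(μ*y)) := by linarith
    have h3 : (0:ℝ) ≤ ((m:ℝ)+1) * μ * exp (-(μ*y)) := by positivity
    exact mul_nonneg h3 (pow_nonneg h2 m)
  have hDIic : ∀ t : ℝ, D (Set.Iic t)
      = ENNReal.ofReal (if 0 ≤ t then (1 - exp (-(μ*t)))^(m+1) else 0) := by
    intro t
    have hInt : Integrable dens (volume.restrict (Set.Iic t)) := by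
      rw [hdens]
      refine (integrable_indicator_iff measurableSet_Ici).2 ?_
      rw [IntegrableOn, Measure.restrict_restrict measurableSet_Ici, Set.Ici_inter_Iic]
      exact hgcont.integrableOn_Icc
    rw [hD, withDensity_apply _ measurableSet_Iic,
      ← ofReal_integral_eq_lintegral_ofReal hInt (ae_of_all _ hdens_nonneg), hdens, hg,
      tiny_maxdensity_Iic μ hμ m t]
  have hmap : P.map M = D := by
    haveI : IsProbabilityMeasure (P.map M) := Measure.isProbabilityMeasure_map hMmeas.aemeasurable
    refine Measure.ext_of_Iic (P.map M) D (fun t => ?_)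
    rw [hCDF t, hDIic t]
    split_ifs with h
    · have h1 : exp (-(μ*t)) ≤ 1 := exp_le_one_iff.2 (by nlinarith)
      rw [← ENNReal.ofReal_pow (by linarith), hlm]
    · rw [ENNReal.ofReal_zero, zero_pow (by omega)]
  -- mgf of M
  have hmgfM : mgf M P θ = (((m:ℝ)+1)*μ)
      * ((∏ j ∈ Finset.range m, (((j:ℝ)+1) * μ))
        / ∏ j ∈ Finset.range (m+1), ((μ-θ) + (j:ℝ)*μ)) := by
    have h1 : mgf M P θ = ∫ x, exp (θ * x) ∂(P.map M) :=
      (integral_map hMmeas.aemeasurable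
        (Measurable.aestronglyMeasurable (by fun_prop : Measurable (fun x : ℝ => exp (θ * x))))).symm
    rw [mgf] at h1
    rw [mgf, h1, hmap, hD]
    have h2 : (fun x : ℝ => ENNReal.ofReal (dens x))
        = fun x => (Real.toNNReal (dens x) : ℝ≥0∞) := rfl
    rw [h2, integral_withDensity_eq_integral_smul hdens_meas.real_toNNReal]
    have h3 : ∀ x : ℝ, Real.toNNReal (dens x) • exp (θ * x)
        = Set.indicator (Set.Ici 0) (fun x => g x * exp (θ * x)) x := by
      intro x
      rw [NNReal.smul_def, smul_eq_mul, Real.coe_toNNReal _ (hdens_nonneg x), hdens]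
      by_cases hx : x ∈ Set.Ici (0:ℝ)
      · rw [Set.indicator_of_mem hx g, Set.indicator_of_mem hx (fun x => g x * exp (θ * x))]
      · rw [Set.indicator_of_notMem hx g, Set.indicator_of_notMem hx
          (fun x => g x * exp (θ * x)), zero_mul]
    rw [integral_congr_ae (Filter.Eventually.of_forall h3),
      integral_indicator measurableSet_Ici, integral_Ici_eq_integral_Ioi]
    have h4 : Set.EqOn (fun x => g x * exp (θ * x))
        (fun x => (((m:ℝ)+1)*μ) * (exp (-((μ-θ)*x)) * (1 - exp (-(μ*x)))^m)) (Set.Ioi 0) := by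
      intro x _
      show g x * exp (θ * x) = (((m:ℝ)+1)*μ) * (exp (-((μ-θ)*x)) * (1 - exp (-(μ*x)))^m)
      rw [hg]
      show ((m:ℝ)+1) * μ * exp (-(μ*x)) * (1 - exp (-(μ*x)))^m * exp (θ * x) = _
      rw [show ((m:ℝ)+1) * μ * exp (-(μ*x)) * (1 - exp (-(μ*x)))^m * exp (θ * x)
        = (((m:ℝ)+1)*μ) * ((exp (-(μ*x)) * exp (θ*x)) * (1 - exp (-(μ*x)))^m) from by ring,
        ← exp_add, show -(μ*x) + θ*x = -((μ-θ)*x) from by ring]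
    rw [setIntegral_congr_fun measurableSet_Ioi h4, integral_const_mul,
      tiny_I μ hμ m (μ-θ) (by linarith)]
  -- mgf of S
  have hlμpos : (0:ℝ) < (l:ℝ) * μ := by
    have : (1:ℝ) ≤ (l:ℝ) := by exact_mod_cast hl
    nlinarith
  have hθl : θ < (l:ℝ) * μ := by
    have : (1:ℝ) ≤ (l:ℝ) := by exact_mod_cast hl
    nlinarith
  have hmgfS : mgf S P θ = ((l:ℝ) * μ / ((l:ℝ) * μ - θ))^(k-l) := by
    have h1 := hindep.mgf_sum (t := θ) hmeas
      (Finset.univ.image (Sum.inr : Fin (k-l) → Fin l ⊕ Fin (k-l)))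
    have hinj : ∀ x ∈ Finset.univ, ∀ y ∈ Finset.univ,
        (Sum.inr : Fin (k-l) → Fin l ⊕ Fin (k-l)) x = Sum.inr y → x = y :=
      fun x _ y _ h => Sum.inr.inj h
    have h2 : ∑ i ∈ Finset.univ.image (Sum.inr : Fin (k-l) → Fin l ⊕ Fin (k-l)),
        Sum.elim Y Z i = S := by
      rw [Finset.sum_image hinj, hS]
      rfl
    rw [h2, Finset.prod_image hinj] at h1
    have h3 : ∀ j : Fin (k-l), mgf (Sum.elim Y Z (Sum.inr j)) P θ
        = (l:ℝ) * μ / ((l:ℝ) * μ - θ) := by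
      intro j
      exact tiny_mgf_exp P (Z j) (hZmeas j) ((l:ℝ)*μ) θ hlμpos hθl (hZlaw j)
    rw [h1, Finset.prod_congr rfl (fun j _ => h3 j), Finset.prod_const, Finset.card_univ,
      Fintype.card_fin]
  -- combine
  have hmgfadd : mgf Δ P θ = mgf M P θ * mgf S P θ := by
    rw [hΔ']
    exact hindepMS.mgf_add' hMmeas.aestronglyMeasurable hSmeas.aestronglyMeasurable
  rw [hmgfadd, hmgfS, hmgfM, mul_comm]
  congr 1
  -- final algebra
  have hIcc : ∏ i ∈ Finset.Icc 1 l, ((i:ℝ) * μ / ((i:ℝ) * μ - θ))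
      = ∏ j ∈ Finset.range l, (((1+j:ℕ):ℝ) * μ / (((1+j:ℕ):ℝ) * μ - θ)) := by
    rw [← Finset.Ico_add_one_right_eq_Icc, Finset.prod_Ico_eq_prod_range]
    simp [Nat.succ_sub_one]
  rw [hIcc, Finset.prod_div_distrib]
  have hnum : ∏ j ∈ Finset.range l, (((1+j:ℕ):ℝ) * μ)
      = (∏ j ∈ Finset.range m, (((j:ℝ)+1) * μ)) * ((((m:ℝ))+1) * μ) := by
    rw [hlm, Finset.prod_range_succ]
    congr 1
    · exact Finset.prod_congr rfl (fun j _ => by push_cast; ring)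
    · push_cast; ring
  have hden : ∏ j ∈ Finset.range l, (((1+j:ℕ):ℝ) * μ - θ)
      = ∏ j ∈ Finset.range (m+1), ((μ-θ) + (j:ℝ)*μ) := by
    rw [hlm]
    exact Finset.prod_congr rfl (fun j _ => by push_cast; ring)
  rw [hnum, hden, mul_div_assoc']
  ring
end

section
/- Let l ≥ 1 and k ≥ l be natural numbers and μ > 0. Let Y₁,…,Y_l be i.i.d. exponential random variables with rate μ, let Z₁,…,Z_{k−l} be i.i.d. exponential random variables with rate lμ, all mutually independent, and let Δ = max_{i∈[1,l]} Y_i + Σ_{j=1}^{k−l} Z_j. Then the expected job service time is E[Δ] = (1/μ)·(k/l + Σ_{i=2}^{l} 1/i). -/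
open MeasureTheory ProbabilityTheory Real Finset

section Aux
open Set Filter Topology

lemma aux_expMeasure_Iic {r : ℝ} (hr : 0 < r) (t : ℝ) :
    expMeasure r (Iic t) = ENNReal.ofReal (if 0 ≤ t then 1 - exp (-(r * t)) else 0) := by
  rw [expMeasure, gammaMeasure, withDensity_apply _ measurableSet_Iic]
  have : gammaPDF 1 r = exponentialPDF r := by
    ext x; rw [exponentialPDF, exponentialPDFReal, gammaPDF]
  rw [this, lintegral_exponentialPDF_eq_antiDeriv hr]

lemma aux_expMeasure_Ioi {r : ℝ} (hr : 0 < r) {t : ℝ} (ht : 0 ≤ t) :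
    expMeasure r (Ioi t) = ENNReal.ofReal (exp (-(r * t))) := by
  haveI := isProbabilityMeasure_expMeasure hr
  have h : Ioi t = (Iic t)ᶜ := by simp
  rw [h, measure_compl measurableSet_Iic (measure_ne_top _ _), aux_expMeasure_Iic hr,
    if_pos ht, measure_univ]
  rw [← ENNReal.ofReal_one, ← ENNReal.ofReal_sub _ (sub_nonneg.mpr (exp_le_one_iff.mpr (by nlinarith)))]
  congr 1; ring

lemma aux_expMeasure_Iio_zero {r : ℝ} : expMeasure r (Iio 0) = 0 := by
  rw [expMeasure, gammaMeasure, withDensity_apply _ measurableSet_Iio]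
  have : gammaPDF 1 r = exponentialPDF r := by
    ext x; rw [exponentialPDF, exponentialPDFReal, gammaPDF]
  rw [this]
  exact lintegral_exponentialPDF_of_nonpos le_rfl

lemma aux_integrableOn {b : ℝ} (hb : 0 < b) (n : ℕ) :
    IntegrableOn (fun t : ℝ => exp (-(b * t)) * (1 - exp (-(b * t))) ^ n) (Ioi 0) := by
  apply (exp_neg_integrableOn_Ioi 0 hb).mono'
    (Continuous.aestronglyMeasurable (by continuity))
  filter_upwards [ae_restrict_mem measurableSet_Ioi] with t ht
  have h1 : exp (-(b * t)) ≤ 1 := exp_le_one_iff.mpr (by nlinarith [le_of_lt (mem_Ioi.mp ht)])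
  have h2 : (0:ℝ) < exp (-(b * t)) := exp_pos _
  rw [Real.norm_eq_abs, abs_of_nonneg (by nlinarith [pow_nonneg (by nlinarith : (0:ℝ) ≤ 1 - exp (-(b*t))) n])]
  have h3 : (1 - exp (-(b * t))) ^ n ≤ 1 :=
    pow_le_one₀ (by nlinarith) (by nlinarith)
  calc exp (-(b*t)) * (1 - exp (-(b*t)))^n ≤ exp (-(b*t)) * 1 := by
        nlinarith [pow_nonneg (by nlinarith : (0:ℝ) ≤ 1 - exp (-(b*t))) n]
    _ = exp (-b * t) := by rw [mul_one]; ring_nf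

lemma aux_integral_pow {b : ℝ} (hb : 0 < b) (n : ℕ) :
    ∫ t in Ioi (0:ℝ), exp (-(b * t)) * (1 - exp (-(b * t))) ^ n
      = 1 / ((n + 1) * b) := by
  have hd : ∀ x ∈ Ioi (0:ℝ), HasDerivAt
      (fun t : ℝ => (1 - exp (-(b * t))) ^ (n+1) / ((n + 1) * b))
      (exp (-(b * x)) * (1 - exp (-(b * x))) ^ n) x := by
    intro x _
    have h1 : HasDerivAt (fun t : ℝ => 1 - exp (-(b * t))) (b * exp (-(b * x))) x := by
      simpa [sub_eq_add_neg] using (hasDerivAt_neg_exp_mul_exp (r := b) (x := x)).const_add 1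
    have h2 := (h1.pow (n+1)).div_const (((n:ℝ) + 1) * b)
    refine h2.congr_deriv ?_
    push_cast
    field_simp
  have hcont : ContinuousWithinAt
      (fun t : ℝ => (1 - exp (-(b * t))) ^ (n+1) / ((n + 1) * b)) (Ici 0) 0 :=
    (Continuous.continuousWithinAt (by fun_prop))
  have htend : Tendsto (fun t : ℝ => (1 - exp (-(b * t))) ^ (n+1) / ((n + 1) * b))
      atTop (𝓝 (1 / ((n + 1) * b))) := by
    have h0 : Tendsto (fun t : ℝ => exp (-(b * t))) atTop (𝓝 0) := by
      have h1 : Tendsto (fun t : ℝ => b * t) atTop atTop :=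
        Tendsto.const_mul_atTop hb tendsto_id
      have h : Tendsto (fun t : ℝ => -(b * t)) atTop atBot :=
        tendsto_neg_atTop_atBot.comp h1
      exact Real.tendsto_exp_atBot.comp h
    have : Tendsto (fun t : ℝ => (1 - exp (-(b * t))) ^ (n+1)) atTop (𝓝 ((1 - 0) ^ (n+1))) :=
      ((tendsto_const_nhds.sub h0).pow (n+1))
    simpa using this.div_const (((n:ℝ) + 1) * b)
  have := integral_Ioi_of_hasDerivAt_of_tendsto hcont hd (aux_integrableOn hb n) htend
  rw [this]
  norm_num

lemma aux_layercake {Ω : Type*} [MeasurableSpace Ω] (P : Measure Ω) [IsProbabilityMeasure P]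
    (X : Ω → ℝ) (hX : Measurable X) (hnn : 0 ≤ᵐ[P] X) (g : ℝ → ℝ)
    (hg : IntegrableOn g (Ioi 0)) (hgnn : ∀ t ∈ Ioi (0:ℝ), 0 ≤ g t)
    (hsurv : ∀ t ∈ Ioi (0:ℝ), P {ω | t < X ω} = ENNReal.ofReal (g t)) :
    Integrable X P ∧ ∫ ω, X ω ∂P = ∫ t in Ioi 0, g t := by
  have key : ∫⁻ ω, ENNReal.ofReal (X ω) ∂P = ENNReal.ofReal (∫ t in Ioi 0, g t) := by
    rw [lintegral_eq_lintegral_meas_lt P hnn hX.aemeasurable]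
    have h1 : ∫⁻ t in Ioi (0:ℝ), P {a | t < X a} = ∫⁻ t in Ioi (0:ℝ), ENNReal.ofReal (g t) :=
      setLIntegral_congr_fun measurableSet_Ioi
        (fun t ht => hsurv t ht)
    rw [h1, ← ofReal_integral_eq_lintegral_ofReal hg
      ((ae_restrict_mem measurableSet_Ioi).mono hgnn)]
  have hfin : ∫⁻ ω, ENNReal.ofReal (X ω) ∂P < ⊤ := by
    rw [key]; exact ENNReal.ofReal_lt_top
  have hint : Integrable X P := by
    refine ⟨hX.aestronglyMeasurable, ?_⟩
    rw [hasFiniteIntegral_iff_ofReal hnn]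
    exact hfin
  refine ⟨hint, ?_⟩
  rw [integral_eq_lintegral_of_nonneg_ae hnn hX.aestronglyMeasurable, key,
    ENNReal.toReal_ofReal (setIntegral_nonneg measurableSet_Ioi hgnn)]

end Aux

/-- expected tiny-tasks split-merge job service time:
`E[Δ] = (1/μ)·(k/l + Σ_{i=2}^{l} 1/i)` where `Δ = max_{i∈[1,l]} Y_i + Σ_{j=1}^{k−l} Z_j`
with `Y_i` i.i.d. `Exp(μ)`, `Z_j` i.i.d. `Exp(lμ)`, all mutually independent. -/
theorem tiny_tasks_split_merge_mean_service_time
    {Ω : Type*} [MeasurableSpace Ω] (P : Measure Ω) [IsProbabilityMeasure P]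
    (l k : ℕ) (hl : 1 ≤ l) (hlk : l ≤ k) (μ : ℝ) (hμ : 0 < μ)
    (Y : Fin l → Ω → ℝ) (Z : Fin (k - l) → Ω → ℝ)
    (hYmeas : ∀ i, Measurable (Y i)) (hZmeas : ∀ j, Measurable (Z j))
    (hYlaw : ∀ i, Measure.map (Y i) P = expMeasure μ)
    (hZlaw : ∀ j, Measure.map (Z j) P = expMeasure (l * μ))
    (hindep : iIndepFun (Sum.elim Y Z) P)
    (Δ : Ω → ℝ) (hΔ : ∀ ω, Δ ω = (⨆ i, Y i ω) + ∑ j, Z j ω) :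
    ∫ ω, Δ ω ∂P = (1 / μ) * ((k : ℝ) / (l : ℝ) + ∑ i ∈ Finset.Icc 2 l, (1 : ℝ) / (i : ℝ)) := by
  haveI : Nonempty (Fin l) := Fin.pos_iff_nonempty.mp hl
  have hl0 : (l:ℝ) ≠ 0 := Nat.cast_ne_zero.mpr (by omega)
  have hlμ : 0 < (l:ℝ) * μ := by positivity
  -- a.e. nonnegativity
  have hYnn : ∀ i, 0 ≤ᵐ[P] Y i := by
    intro i
    have : P {ω | Y i ω < 0} = 0 := by
      have : P ((Y i) ⁻¹' Set.Iio 0) = (Measure.map (Y i) P) (Set.Iio 0) := by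
        rw [Measure.map_apply (hYmeas i) measurableSet_Iio]
      simpa [Set.preimage, Set.Iio] using this.trans (by rw [hYlaw i]; exact aux_expMeasure_Iio_zero)
    filter_upwards [measure_eq_zero_iff_ae_notMem.mp this] with ω hω
    simpa using hω
  have hZnn : ∀ j, 0 ≤ᵐ[P] Z j := by
    intro j
    have : P {ω | Z j ω < 0} = 0 := by
      have : P ((Z j) ⁻¹' Set.Iio 0) = (Measure.map (Z j) P) (Set.Iio 0) := by
        rw [Measure.map_apply (hZmeas j) measurableSet_Iio]
      simpa [Set.preimage, Set.Iio] using this.trans (by rw [hZlaw j]; exact aux_expMeasure_Iio_zero)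
    filter_upwards [measure_eq_zero_iff_ae_notMem.mp this] with ω hω
    simpa using hω
  -- the max
  set M : Ω → ℝ := fun ω => ⨆ i, Y i ω with hM
  have hMmeas : Measurable M := Measurable.iSup hYmeas
  have hMnn : 0 ≤ᵐ[P] M := by
    have := hYnn ⟨0, hl⟩
    filter_upwards [this] with ω hω
    exact le_trans hω (le_ciSup (f := fun i => Y i ω)
      (Set.Finite.bddAbove (Set.finite_range _)) ⟨0, hl⟩)
  -- survival function of M
  have hsurvM : ∀ t ∈ Set.Ioi (0:ℝ), P {ω | t < M ω}
      = ENNReal.ofReal (1 - (1 - exp (-(μ * t))) ^ l) := by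
    intro t ht
    have ht0 : (0:ℝ) ≤ t := le_of_lt ht
    have hset : {ω | t < M ω} = (⋂ i, (Y i) ⁻¹' Set.Iic t)ᶜ := by
      ext ω
      simp only [Set.mem_setOf_eq, Set.mem_compl_iff, Set.mem_iInter, Set.mem_preimage,
        Set.mem_Iic, not_forall, not_le, hM]
      exact lt_ciSup_iff (Set.Finite.bddAbove (Set.finite_range _))
    have hindep' : P (⋂ i, (Y i) ⁻¹' Set.Iic t) = ∏ i, P ((Y i) ⁻¹' Set.Iic t) := by
      have key := hindep.measure_inter_preimage_eq_mul
        (S := Finset.univ.map ⟨Sum.inl, Sum.inl_injective⟩)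
        (sets := Sum.elim (fun _ => Set.Iic t) (fun _ => Set.univ))
        (by rintro (i | j) _
            · exact measurableSet_Iic
            · exact MeasurableSet.univ)
      have hL : (⋂ i ∈ Finset.univ.map ⟨Sum.inl, Sum.inl_injective⟩,
          (Sum.elim Y Z i) ⁻¹' (Sum.elim (fun _ => Set.Iic t) (fun _ => Set.univ) i))
          = ⋂ i, (Y i) ⁻¹' Set.Iic t := by
        ext ω
        simp [Finset.mem_map]
      have hR : (∏ i ∈ Finset.univ.map ⟨Sum.inl, Sum.inl_injective⟩,
          P ((Sum.elim Y Z i) ⁻¹' (Sum.elim (fun _ => Set.Iic t) (fun _ => Set.univ) i)))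
          = ∏ i, P ((Y i) ⁻¹' Set.Iic t) := by
        rw [Finset.prod_map]
        rfl
      rw [hL, hR] at key
      exact key
    have hone : ∀ i, P ((Y i) ⁻¹' Set.Iic t) = ENNReal.ofReal (1 - exp (-(μ * t))) := by
      intro i
      rw [← Measure.map_apply (hYmeas i) measurableSet_Iic, hYlaw i,
        aux_expMeasure_Iic hμ, if_pos ht0]
    have hprod : P (⋂ i, (Y i) ⁻¹' Set.Iic t)
        = ENNReal.ofReal ((1 - exp (-(μ * t))) ^ l) := by
      rw [hindep']
      simp only [hone, Finset.prod_const, Finset.card_univ, Fintype.card_fin]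
      rw [ENNReal.ofReal_pow (sub_nonneg.mpr (exp_le_one_iff.mpr (by nlinarith)))]
    rw [hset, measure_compl (MeasurableSet.iInter fun i => (hYmeas i) measurableSet_Iic)
      (measure_ne_top _ _), measure_univ, hprod,
      ← ENNReal.ofReal_one, ← ENNReal.ofReal_sub _ (pow_nonneg
        (sub_nonneg.mpr (exp_le_one_iff.mpr (by nlinarith))) l)]
  -- rewrite survival as a finite geometric sum
  have hgeom : ∀ t : ℝ, 1 - (1 - exp (-(μ * t))) ^ l
      = ∑ j ∈ Finset.range l, exp (-(μ * t)) * (1 - exp (-(μ * t))) ^ j := by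
    intro t
    set x := exp (-(μ * t)) with hx
    have h := geom_sum_mul (1 - x) l
    have : ∑ j ∈ Finset.range l, x * (1 - x) ^ j
        = x * ∑ j ∈ Finset.range l, (1 - x) ^ j := by rw [Finset.mul_sum]
    rw [this]
    nlinarith [h]
  -- E[M]
  have hMlayer := aux_layercake P M hMmeas hMnn
    (fun t => ∑ j ∈ Finset.range l, exp (-(μ * t)) * (1 - exp (-(μ * t))) ^ j)
    (integrable_finset_sum _ (fun j _ => aux_integrableOn hμ j))
    (fun t ht => Finset.sum_nonneg fun j _ => by
      have h1 : exp (-(μ * t)) ≤ 1 := exp_le_one_iff.mpr (by nlinarith [Set.mem_Ioi.mp ht])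
      exact mul_nonneg (le_of_lt (exp_pos _)) (pow_nonneg (by nlinarith) j))
    (fun t ht => by rw [hsurvM t ht, hgeom t])
  have hMint : Integrable M P := hMlayer.1
  have hMval : ∫ ω, M ω ∂P = ∑ j ∈ Finset.range l, 1 / ((j + 1) * μ) := by
    rw [hMlayer.2, integral_finset_sum _ (fun j _ => aux_integrableOn hμ j)]
    exact Finset.sum_congr rfl fun j _ => aux_integral_pow hμ j
  -- E[Z j]
  have hZlayer : ∀ j, Integrable (Z j) P ∧ ∫ ω, Z j ω ∂P = 1 / ((l:ℝ) * μ) := by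
    intro j
    have h := aux_layercake P (Z j) (hZmeas j) (hZnn j)
      (fun t => exp (-(((l:ℝ) * μ) * t)))
      (by simpa using aux_integrableOn hlμ 0)
      (fun t ht => le_of_lt (exp_pos _))
      (fun t ht => by
        have : {ω | t < Z j ω} = (Z j) ⁻¹' Set.Ioi t := rfl
        rw [this, ← Measure.map_apply (hZmeas j) measurableSet_Ioi, hZlaw j,
          aux_expMeasure_Ioi hlμ (le_of_lt ht)])
    refine ⟨h.1, ?_⟩
    rw [h.2]
    have := aux_integral_pow hlμ 0
    simpa using this
  -- decompose E[Δ]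
  have hΔint : ∫ ω, Δ ω ∂P = ∫ ω, M ω ∂P + ∑ j, ∫ ω, Z j ω ∂P := by
    have h1 : ∫ ω, Δ ω ∂P = ∫ ω, (M ω + ∑ j, Z j ω) ∂P := by
      exact integral_congr_ae (Filter.Eventually.of_forall fun ω => hΔ ω)
    rw [h1, integral_add hMint (integrable_finset_sum _ fun j _ => (hZlayer j).1),
      integral_finset_sum _ fun j _ => (hZlayer j).1]
  -- final computation
  rw [hΔint, hMval]
  simp only [fun j => (hZlayer j).2]
  rw [Finset.sum_const, Finset.card_univ, Fintype.card_fin, nsmul_eq_mul]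
  have hcast : ((k - l : ℕ) : ℝ) = (k:ℝ) - (l:ℝ) := by
    rw [Nat.cast_sub hlk]
  have hsum : ∑ j ∈ Finset.range l, (1:ℝ) / ((j + 1) * μ)
      = (1/μ) * (1 + ∑ i ∈ Finset.Icc 2 l, (1:ℝ) / (i:ℝ)) := by
    have h1 : ∑ j ∈ Finset.range l, (1:ℝ) / ((j + 1) * μ)
        = (1/μ) * ∑ j ∈ Finset.range l, (1:ℝ) / (j + 1) := by
      rw [Finset.mul_sum]
      exact Finset.sum_congr rfl fun j _ => by
        have hj : ((j:ℝ) + 1) ≠ 0 := by positivity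
        field_simp
    rw [h1]
    congr 1
    have h2 : ∀ n : ℕ, ∑ i ∈ Finset.Icc 1 n, (1:ℝ) / (i:ℝ)
        = ∑ j ∈ Finset.range n, (1:ℝ) / (j + 1) := by
      intro n
      induction n with
      | zero => simp
      | succ m ih =>
        rw [Finset.sum_Icc_succ_top (by omega), Finset.sum_range_succ, ih]
        push_cast
        ring
    rw [← h2 l]
    have h3 : Finset.Icc 1 l = insert 1 (Finset.Icc 2 l) := by
      ext i
      simp only [Finset.mem_Icc, Finset.mem_insert]
      omega
    rw [h3, Finset.sum_insert (by simp)]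
    norm_num
  rw [hsum, hcast]
  field_simp
  ring
end

section
/- Let l ≥ 1 be a natural number, μ > 0, and let Y₁,…,Y_l be i.i.d. exponential random variables with rate μ. Then max_{i∈[1,l]} Y_i has the same distribution as Σ_{i=1}^{l} Y_i / i. -/
open MeasureTheory ProbabilityTheory Finset Real Set

lemma expMeasure_Iic {r : ℝ} (hr : 0 < r) (t : ℝ) :
    expMeasure r (Iic t) = ENNReal.ofReal (if 0 ≤ t then 1 - Real.exp (-(r*t)) else 0) := by
  rw [expMeasure, gammaMeasure, withDensity_apply _ measurableSet_Iic]
  exact lintegral_exponentialPDF_eq_antiDeriv hr t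

lemma map_div_expMeasure {μ : ℝ} (hμ : 0 < μ) {c : ℝ} (hc : 0 < c) :
    Measure.map (fun x => x / c) (expMeasure μ) = expMeasure (c * μ) := by
  have h1 : IsProbabilityMeasure (expMeasure μ) := isProbabilityMeasure_expMeasure hμ
  have hmeas : Measurable fun x : ℝ => x / c := measurable_id.div_const c
  have : IsProbabilityMeasure (Measure.map (fun x => x / c) (expMeasure μ)) :=
    Measure.isProbabilityMeasure_map hmeas.aemeasurable
  refine MeasureTheory.Measure.ext_of_Iic _ _ fun t => ?_
  rw [Measure.map_apply hmeas measurableSet_Iic]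
  have hpre : (fun x : ℝ => x / c) ⁻¹' Iic t = Iic (t * c) := by
    ext x; simp [div_le_iff₀ hc]
  rw [hpre, expMeasure_Iic hμ, expMeasure_Iic (by positivity)]
  have h0 : (0 ≤ t * c) ↔ (0 ≤ t) := by
    constructor
    · intro h; by_contra h'; push_neg at h'; nlinarith
    · intro h; positivity
  congr 1
  rw [if_congr h0 rfl rfl]
  split_ifs with h
  · congr 2; ring
  · rfl

lemma exp_algebra (μ t w : ℝ) (k : ℕ) :
    (((k:ℝ)+1) * μ) * Real.exp (-((((k:ℝ)+1) * μ) * w)) * (1 - Real.exp (-(μ*(t-w))))^k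
      = ((k:ℝ)+1) * μ * Real.exp (-(μ*w)) * (Real.exp (-(μ*w)) - Real.exp (-(μ*t)))^k := by
  have e1 : Real.exp (-((((k:ℝ)+1) * μ) * w))
      = Real.exp (-(μ*w)) * Real.exp ((k:ℝ) * (-(μ*w))) := by
    rw [← Real.exp_add]; congr 1; ring
  have e2 : Real.exp (-(μ*w)) - Real.exp (-(μ*t))
      = Real.exp (-(μ*w)) * (1 - Real.exp (-(μ*(t-w)))) := by
    rw [mul_sub, mul_one, ← Real.exp_add]; congr 2; ring
  rw [e1, e2, mul_pow, Real.exp_nat_mul]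
  ring

lemma sum_exp_cdf {Ω : Type*} [MeasurableSpace Ω] (P : Measure Ω) [IsProbabilityMeasure P]
    {μ : ℝ} (hμ : 0 < μ) {l : ℕ} (Z : Fin l → Ω → ℝ)
    (hZmeas : ∀ i, Measurable (Z i))
    (hZlaw : ∀ i, Measure.map (Z i) P = expMeasure (((i : ℕ) + 1) * μ))
    (hZindep : iIndepFun Z P) :
    ∀ k, k ≤ l → ∀ t : ℝ,
      P {ω | ∑ i ∈ univ.filter (fun i : Fin l => (i : ℕ) < k), Z i ω ≤ t}
        = ENNReal.ofReal (if 0 ≤ t then (1 - Real.exp (-(μ * t))) ^ k else 0) := by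
  classical
  -- nonnegativity a.e.
  have hZnn : ∀ i, ∀ᵐ ω ∂P, 0 ≤ Z i ω := by
    intro i
    have hle : P {ω | Z i ω < 0} = 0 := by
      have h1 : P {ω | Z i ω < 0} = Measure.map (Z i) P (Iio 0) := by
        rw [Measure.map_apply (hZmeas i) measurableSet_Iio]; rfl
      have h2 : Measure.map (Z i) P (Iio 0) ≤ Measure.map (Z i) P (Iic 0) :=
        measure_mono Iio_subset_Iic_self
      rw [hZlaw i, expMeasure_Iic (by positivity)] at h2
      simpa using le_antisymm (by simpa [h1, hZlaw i] using h2) zero_le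
    rw [ae_iff]
    simpa [not_le] using hle
  have hsum_nn : ∀ s : Finset (Fin l), ∀ᵐ ω ∂P, 0 ≤ ∑ i ∈ s, Z i ω := by
    intro s
    filter_upwards [ae_all_iff.mpr hZnn] with ω hω
    exact Finset.sum_nonneg fun i _ => hω i
  have hneg : ∀ (s : Finset (Fin l)) (t : ℝ), t < 0 → P {ω | ∑ i ∈ s, Z i ω ≤ t} = 0 := by
    intro s t ht
    have h : ∀ᵐ ω ∂P, ¬ (∑ i ∈ s, Z i ω ≤ t) :=
      (hsum_nn s).mono fun ω hω h' => (not_le.mpr ht) (hω.trans h')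
    rw [ae_iff] at h
    simpa using h
  intro k
  induction k with
  | zero =>
    intro _ t
    have h0 : (univ.filter (fun i : Fin l => (i:ℕ) < 0)) = ∅ := by simp
    simp only [h0, Finset.sum_empty]
    by_cases ht : 0 ≤ t
    · simp [ht]
    · simp [ht]
  | succ k ih =>
    intro hk1 t
    have hkl : k < l := lt_of_lt_of_le (Nat.lt_succ_self k) hk1
    have ihk := ih hkl.le
    set j : Fin l := ⟨k, hkl⟩ with hj
    set s : Finset (Fin l) := univ.filter (fun i : Fin l => (i:ℕ) < k) with hs
    have hjs : j ∉ s := by simp [hs, hj]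
    have hins : univ.filter (fun i : Fin l => (i:ℕ) < k+1) = insert j s := by
      ext i
      simp [hs, hj, Nat.lt_succ_iff_lt_or_eq, Fin.ext_iff, or_comm]
      exact Nat.le_iff_lt_or_eq.trans or_comm
    set X : Ω → ℝ := fun ω => ∑ i ∈ s, Z i ω with hX
    have hXmeas : Measurable X := Finset.measurable_sum _ fun i _ => hZmeas i
    rcases lt_or_ge t 0 with ht | ht
    · rw [if_neg (not_le.mpr ht)]
      simp only [hins]
      rw [hneg _ t ht, ENNReal.ofReal_zero]
    · rw [if_pos ht]
      set c : ℝ := ((k:ℝ) + 1) * μ with hc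
      have hcpos : 0 < c := by positivity
      have hW : Measure.map (Z j) P = expMeasure c := by
        have h := hZlaw j
        simpa [hj, hc] using h
      have hIndep : IndepFun X (Z j) P := by
        have h := hZindep.indepFun_finset_sum_of_notMem hZmeas hjs
        have hXe : (∑ i ∈ s, Z i) = X := by funext ω; simp [hX, Finset.sum_apply]
        rwa [hXe] at h
      have hpair : Measure.map (fun ω => (Z j ω, X ω)) P
          = (Measure.map (Z j) P).prod (Measure.map X P) :=
        (indepFun_iff_map_prod_eq_prod_map_map (hZmeas j).aemeasurable
          hXmeas.aemeasurable).mp hIndep.symm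
      have hsetm : MeasurableSet {p : ℝ × ℝ | p.1 + p.2 ≤ t} :=
        measurableSet_le (measurable_fst.add measurable_snd) measurable_const
      have hev : {ω | ∑ i ∈ univ.filter (fun i : Fin l => (i:ℕ) < k+1), Z i ω ≤ t}
          = (fun ω => (Z j ω, X ω)) ⁻¹' {p : ℝ × ℝ | p.1 + p.2 ≤ t} := by
        ext ω
        simp only [hins]
        simp [hins, Finset.sum_insert hjs, hX]
      rw [hev, ← Measure.map_apply ((hZmeas j).prodMk hXmeas) hsetm, hpair,
        Measure.prod_apply hsetm, hW]
      have hinner : ∀ w : ℝ, Measure.map X P (Prod.mk w ⁻¹' {p : ℝ × ℝ | p.1 + p.2 ≤ t})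
          = ENNReal.ofReal (if 0 ≤ t - w then (1 - Real.exp (-(μ*(t-w))))^k else 0) := by
        intro w
        have hpre : Prod.mk w ⁻¹' {p : ℝ × ℝ | p.1 + p.2 ≤ t} = Iic (t - w) := by
          ext x
          simp only [Set.mem_preimage, Set.mem_setOf_eq, Set.mem_Iic]
          constructor <;> intro h <;> linarith
        rw [hpre, Measure.map_apply hXmeas measurableSet_Iic]
        exact ihk (t - w)
      simp_rw [hinner]
      -- now compute the lintegral over expMeasure c
      set f : ℝ → ℝ := fun w => ((k:ℝ)+1) * μ * Real.exp (-(μ*w))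
          * (Real.exp (-(μ*w)) - Real.exp (-(μ*t)))^k with hf
      have hfcont : Continuous f := by fun_prop
      have hGmeas : Measurable fun w : ℝ =>
          ENNReal.ofReal (if 0 ≤ t - w then (1 - Real.exp (-(μ*(t-w))))^k else 0) := by
        apply Measurable.ennreal_ofReal
        exact Measurable.ite
          (measurableSet_le measurable_const (by fun_prop)) (by fun_prop) measurable_const
      have hpdf_meas : Measurable (exponentialPDF c) :=
        (measurable_exponentialPDFReal c).ennreal_ofReal
      have hpoint : ∀ w : ℝ, exponentialPDF c w
            * ENNReal.ofReal (if 0 ≤ t - w then (1 - Real.exp (-(μ*(t-w))))^k else 0)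
          = (Icc (0:ℝ) t).indicator (fun w => ENNReal.ofReal (f w)) w := by
        intro w
        rw [exponentialPDF_eq]
        rcases lt_or_ge w 0 with hw0 | hw0
        · rw [Set.indicator_of_notMem
              (fun hmem => absurd (Set.mem_Icc.mp hmem).1 (not_le.mpr hw0)),
            if_neg (not_le.mpr hw0), ENNReal.ofReal_zero, zero_mul]
        · rcases le_or_gt w t with hwt | hwt
          · rw [Set.indicator_of_mem (Set.mem_Icc.mpr ⟨hw0, hwt⟩), if_pos hw0,
              if_pos (by linarith : (0:ℝ) ≤ t - w), ← ENNReal.ofReal_mul (by positivity)]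
            congr 1
            simp only [hf, hc]
            exact exp_algebra μ t w k
          · rw [Set.indicator_of_notMem
                (fun hmem => absurd (Set.mem_Icc.mp hmem).2 (not_le.mpr hwt)),
              if_neg (by push_neg; linarith : ¬ (0:ℝ) ≤ t - w), ENNReal.ofReal_zero, mul_zero]
      have hIntOn : IntegrableOn f (Icc (0:ℝ) t) := hfcont.integrableOn_Icc
      have hnnf : 0 ≤ᵐ[volume.restrict (Icc (0:ℝ) t)] f := by
        refine (ae_restrict_iff' measurableSet_Icc).mpr (ae_of_all _ fun w hw => ?_)
        rw [Set.mem_Icc] at hw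
        have hbase : Real.exp (-(μ*t)) ≤ Real.exp (-(μ*w)) :=
          Real.exp_le_exp.mpr (by nlinarith [hw.1, hw.2])
        have h1 : (0:ℝ) ≤ Real.exp (-(μ*w)) - Real.exp (-(μ*t)) := by linarith
        show (0:ℝ) ≤ f w
        simp only [hf]
        exact mul_nonneg (mul_nonneg (by positivity) (Real.exp_pos _).le) (pow_nonneg h1 k)
      have hderiv : ∀ w ∈ uIcc (0:ℝ) t,
          HasDerivAt (fun w => -(Real.exp (-(μ*w)) - Real.exp (-(μ*t)))^(k+1)) (f w) w := by
        intro w _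
        have h1 : HasDerivAt (fun w : ℝ => Real.exp (-(μ*w))) (Real.exp (-(μ*w)) * (-μ)) w := by
          have := ((hasDerivAt_id w).const_mul (-μ)).exp
          simpa [neg_mul] using this
        have h2 := ((h1.sub_const (Real.exp (-(μ*t)))).pow (k+1)).neg
        refine h2.congr_deriv ?_
        rw [hf]
        simp only [Nat.add_sub_cancel]
        push_cast
        ring
      have hintval : ∫ w in (0:ℝ)..t, f w = (1 - Real.exp (-(μ*t)))^(k+1) := by
        rw [intervalIntegral.integral_eq_sub_of_hasDerivAt hderiv
          (hfcont.intervalIntegrable 0 t)]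
        simp [sub_self]
      calc ∫⁻ w, ENNReal.ofReal (if 0 ≤ t - w then (1 - Real.exp (-(μ*(t-w))))^k else 0)
              ∂(expMeasure c)
          = ∫⁻ w, exponentialPDF c w
              * ENNReal.ofReal (if 0 ≤ t - w then (1 - Real.exp (-(μ*(t-w))))^k else 0) := by
            rw [expMeasure, gammaMeasure]
            exact lintegral_withDensity_eq_lintegral_mul _ hpdf_meas hGmeas
        _ = ∫⁻ w, (Icc (0:ℝ) t).indicator (fun w => ENNReal.ofReal (f w)) w :=
            lintegral_congr hpoint
        _ = ∫⁻ w in Icc (0:ℝ) t, ENNReal.ofReal (f w) :=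
            lintegral_indicator measurableSet_Icc _
        _ = ENNReal.ofReal (∫ w in Icc (0:ℝ) t, f w) :=
            (ofReal_integral_eq_lintegral_ofReal hIntOn hnnf).symm
        _ = ENNReal.ofReal ((1 - Real.exp (-(μ*t)))^(k+1)) := by
            rw [integral_Icc_eq_integral_Ioc, ← intervalIntegral.integral_of_le ht, hintval]
/-- for `Y₁,…,Y_l` i.i.d. `Exp(μ)`, the maximum `max_{i∈[1,l]} Y_i` has
the same distribution as `Σ_{i=1}^{l} Y_i / i`. -/
theorem max_of_iid_exponentials_eq_dist_sum
    {Ω : Type*} [MeasurableSpace Ω] (P : Measure Ω) [IsProbabilityMeasure P]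
    (l : ℕ) (hl : 1 ≤ l) (μ : ℝ) (hμ : 0 < μ)
    (Y : Fin l → Ω → ℝ)
    (hYmeas : ∀ i, Measurable (Y i))
    (hYlaw : ∀ i, Measure.map (Y i) P = expMeasure μ)
    (hindep : iIndepFun Y P) :
    Measure.map (fun ω => ⨆ i, Y i ω) P
      = Measure.map (fun ω => ∑ i : Fin l, Y i ω / ((i : ℕ) + 1 : ℝ)) P := by
  classical
  have hNe : Nonempty (Fin l) := ⟨⟨0, hl⟩⟩
  -- the rescaled variables
  set Z : Fin l → Ω → ℝ := fun i ω => Y i ω / ((i : ℕ) + 1 : ℝ) with hZ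
  have hZmeas : ∀ i, Measurable (Z i) := fun i => (hYmeas i).div_const _
  have hZlaw : ∀ i, Measure.map (Z i) P = expMeasure (((i : ℕ) + 1) * μ) := by
    intro i
    have hcomp : Z i = (fun x => x / ((i : ℕ) + 1 : ℝ)) ∘ Y i := rfl
    have hm : Measurable (fun x : ℝ => x / ((i : ℕ) + 1 : ℝ)) := measurable_id.div_const _
    rw [hcomp, ← Measure.map_map hm (hYmeas i), hYlaw i,
      map_div_expMeasure hμ (by positivity)]
  have hZindep : iIndepFun Z P :=
    hindep.comp (fun i x => x / ((i : ℕ) + 1 : ℝ)) (fun i => measurable_id.div_const _)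
  have hsupmeas : Measurable fun ω => ⨆ i, Y i ω := Measurable.iSup hYmeas
  have hsummeas : Measurable fun ω => ∑ i : Fin l, Y i ω / ((i : ℕ) + 1 : ℝ) :=
    Finset.measurable_sum _ fun i _ => (hYmeas i).div_const _
  have : IsProbabilityMeasure (Measure.map (fun ω => ⨆ i, Y i ω) P) :=
    Measure.isProbabilityMeasure_map hsupmeas.aemeasurable
  refine MeasureTheory.Measure.ext_of_Iic _ _ fun t => ?_
  -- RHS via sum_exp_cdf
  have hfilter : Finset.univ.filter (fun i : Fin l => (i : ℕ) < l) = Finset.univ := by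
    apply Finset.filter_true_of_mem; intro i _; exact i.isLt
  have hRHS : Measure.map (fun ω => ∑ i : Fin l, Y i ω / ((i : ℕ) + 1 : ℝ)) P (Iic t)
      = ENNReal.ofReal (if 0 ≤ t then (1 - Real.exp (-(μ * t))) ^ l else 0) := by
    rw [Measure.map_apply hsummeas measurableSet_Iic]
    have := sum_exp_cdf P hμ Z hZmeas hZlaw hZindep l le_rfl t
    simp only [hfilter] at this
    exact this
  rw [hRHS]
  -- LHS
  rw [Measure.map_apply hsupmeas measurableSet_Iic]
  have hset : (fun ω => ⨆ i, Y i ω) ⁻¹' Iic t = ⋂ i, Y i ⁻¹' Iic t := by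
    ext ω
    simp only [Set.mem_preimage, Set.mem_Iic, Set.mem_iInter]
    rw [ciSup_le_iff (Set.Finite.bddAbove (Set.finite_range _))]
  rw [hset, hindep.meas_iInter (fun i => ⟨Iic t, measurableSet_Iic, rfl⟩)]
  have hone : ∀ i : Fin l, P (Y i ⁻¹' Iic t)
      = ENNReal.ofReal (if 0 ≤ t then 1 - Real.exp (-(μ*t)) else 0) := by
    intro i
    rw [← Measure.map_apply (hYmeas i) measurableSet_Iic, hYlaw i, expMeasure_Iic hμ]
  simp only [hone, Finset.prod_const, Finset.card_univ, Fintype.card_fin]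
  by_cases ht : 0 ≤ t
  · simp only [if_pos ht]
    rw [← ENNReal.ofReal_pow]
    have : Real.exp (-(μ*t)) ≤ 1 := Real.exp_le_one_iff.mpr (by nlinarith)
    linarith
  · simp only [if_neg ht, ENNReal.ofReal_zero]
    exact zero_pow (by omega)
end

section
/- Let l ≥ 1 be a natural number, μ > 0, and let Y₁,…,Y_l be i.i.d. exponential random variables with rate μ. Then for every θ ∈ (0, μ), E[e^{θ · max_{i∈[1,l]} Y_i}] = ∏_{i=1}^{l} iμ/(iμ−θ). -/
open MeasureTheory ProbabilityTheory Real Finset Set Filter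

lemma aux_tendsto_exp {b : ℝ} (hb : 0 < b) :
    Tendsto (fun x : ℝ => Real.exp (-(b*x))) atTop (nhds 0) := by
  have h1 : Tendsto (fun x : ℝ => -(b*x)) atTop atBot := by
    have := Filter.Tendsto.const_mul_atTop hb (tendsto_id (α := ℝ))
    exact tendsto_neg_atBot_iff.mpr this
  exact Real.tendsto_exp_atBot.comp h1

lemma aux_cont {a μ : ℝ} (m : ℕ) :
    Continuous (fun x => Real.exp (-(a*x)) * (1 - Real.exp (-(μ*x)))^m) := by
  fun_prop

lemma aux_integrable {a μ : ℝ} (ha : 0 < a) (hμ : 0 < μ) (m : ℕ) :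
    IntegrableOn (fun x => Real.exp (-(a*x)) * (1 - Real.exp (-(μ*x)))^m) (Set.Ioi 0) := by
  have hg : IntegrableOn (fun x => Real.exp (-a*x)) (Set.Ioi (0:ℝ)) :=
    exp_neg_integrableOn_Ioi 0 ha
  refine Integrable.mono hg ((aux_cont m).aestronglyMeasurable.restrict) ?_
  filter_upwards [ae_restrict_mem measurableSet_Ioi] with x hx
  have hx0 : (0:ℝ) < x := hx
  have h1 : Real.exp (-(μ*x)) ≤ 1 := Real.exp_le_one_iff.mpr (by nlinarith)
  have h2 : (0:ℝ) < Real.exp (-(μ*x)) := Real.exp_pos _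
  have hu0 : (0:ℝ) ≤ 1 - Real.exp (-(μ*x)) := by linarith
  have hu1 : 1 - Real.exp (-(μ*x)) ≤ 1 := by linarith
  have hpow : (1 - Real.exp (-(μ*x)))^m ≤ 1 := pow_le_one₀ hu0 hu1
  rw [Real.norm_eq_abs, Real.norm_eq_abs, abs_of_nonneg (by positivity),
    abs_of_nonneg (by positivity), neg_mul]
  nlinarith [Real.exp_pos (-(a*x)), pow_nonneg hu0 m]

lemma aux_exp_hasDeriv (b x : ℝ) :
    HasDerivAt (fun y => Real.exp (-(b*y))) (-b * Real.exp (-(b*x))) x := by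
  have h1 : HasDerivAt (fun y : ℝ => -(b*y)) (-b) x := by
    simpa [Pi.neg_def] using ((hasDerivAt_id x).const_mul b).neg
  simpa [mul_comm] using h1.exp

lemma aux_hasDeriv {a μ : ℝ} (ha : a ≠ 0) (k : ℕ) (x : ℝ) :
    HasDerivAt (fun y => -(1/a) * (Real.exp (-(a*y)) * (1 - Real.exp (-(μ*y)))^(k+1)))
      (Real.exp (-(a*x)) * (1 - Real.exp (-(μ*x)))^(k+1)
        - (((k:ℝ)+1)*μ/a) * (Real.exp (-((a+μ)*x)) * (1 - Real.exp (-(μ*x)))^k)) x := by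
  have hu : HasDerivAt (fun y => (1 - Real.exp (-(μ*y)))^(k+1))
      (((k:ℝ)+1) * (1 - Real.exp (-(μ*x)))^k * (μ * Real.exp (-(μ*x)))) x := by
    have h2 := ((aux_exp_hasDeriv μ x).const_sub 1).pow (k+1)
    simpa [Nat.succ_sub_one, Pi.pow_def] using h2
  have h3 := ((aux_exp_hasDeriv a x).mul hu).const_mul (-(1/a))
  refine h3.congr_deriv ?_
  rw [show -((a+μ)*x) = -(a*x) + -(μ*x) by ring, Real.exp_add]
  field_simp
  ring

lemma aux_Kval {μ : ℝ} (hμ : 0 < μ) : ∀ (m : ℕ) (a : ℝ), 0 < a →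
    (∫ x in Set.Ioi (0:ℝ), Real.exp (-(a*x)) * (1 - Real.exp (-(μ*x)))^m)
      = ((m.factorial : ℝ) * μ^m) / ∏ j ∈ Finset.range (m+1), (a + (j:ℝ)*μ) := by
  intro m
  induction m with
  | zero =>
    intro a ha
    have hFd : ∀ x ∈ Set.Ici (0:ℝ), HasDerivAt (fun y => -(Real.exp (-(a*y))/a))
        (Real.exp (-(a*x)) * (1 - Real.exp (-(μ*x)))^0) x := by
      intro x _
      have := ((aux_exp_hasDeriv a x).div_const a).neg
      refine this.congr_deriv ?_
      field_simp
    have hlim : Tendsto (fun y : ℝ => -(Real.exp (-(a*y))/a)) atTop (nhds 0) := by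
      have := (aux_tendsto_exp ha).div_const a |>.neg
      simpa using this
    have h0 := integral_Ioi_of_hasDerivAt_of_tendsto' hFd (aux_integrable ha hμ 0) hlim
    rw [h0]
    simp [Real.exp_zero]
  | succ m ih =>
    intro a ha
    have hFd : ∀ x ∈ Set.Ici (0:ℝ), HasDerivAt
        (fun y => -(1/a) * (Real.exp (-(a*y)) * (1 - Real.exp (-(μ*y)))^(m+1)))
        ((fun x => Real.exp (-(a*x)) * (1 - Real.exp (-(μ*x)))^(m+1)
          - (((m:ℝ)+1)*μ/a) * (Real.exp (-((a+μ)*x)) * (1 - Real.exp (-(μ*x)))^m)) x) x :=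
      fun x _ => aux_hasDeriv ha.ne' m x
    have hint1 := aux_integrable ha hμ (m+1) (μ := μ)
    have hint2 := (aux_integrable (by linarith : (0:ℝ) < a + μ) hμ m).const_mul (((m:ℝ)+1)*μ/a)
    have hlim : Tendsto (fun y => -(1/a) * (Real.exp (-(a*y)) * (1 - Real.exp (-(μ*y)))^(m+1)))
        atTop (nhds 0) := by
      have h1 := (aux_tendsto_exp ha).mul (((aux_tendsto_exp hμ).const_sub 1).pow (m+1))
      have h2 := h1.const_mul (-(1/a))
      simpa using h2
    have h0 := integral_Ioi_of_hasDerivAt_of_tendsto' hFd (hint1.sub hint2) hlim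
    rw [integral_sub hint1 hint2] at h0
    simp only [Real.exp_zero, mul_zero, sub_self] at h0
    have h0' : (∫ x in Set.Ioi (0:ℝ), Real.exp (-(a*x)) * (1 - Real.exp (-(μ*x)))^(m+1))
        = (((m:ℝ)+1)*μ/a) * ∫ x in Set.Ioi (0:ℝ),
            Real.exp (-((a+μ)*x)) * (1 - Real.exp (-(μ*x)))^m := by
      rw [← integral_const_mul]
      simp only [neg_zero, Real.exp_zero, sub_self, zero_pow (Nat.succ_ne_zero m), mul_zero,
        neg_mul, neg_zero, sub_zero, one_mul] at h0
      linarith [h0]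
    rw [h0', ih (a+μ) (by linarith)]
    have hprod : ∏ j ∈ Finset.range (m+2), (a + (j:ℝ)*μ)
        = a * ∏ j ∈ Finset.range (m+1), ((a+μ) + (j:ℝ)*μ) := by
      rw [Finset.prod_range_succ' (fun j => (a + (j:ℝ)*μ)) (m+1)]
      push_cast
      rw [mul_comm]
      congr 1
      · norm_num
      · apply Finset.prod_congr rfl
        intro j _
        push_cast; ring
    rw [hprod]
    have hne1 : (∏ j ∈ Finset.range (m+1), ((a+μ) + (j:ℝ)*μ)) ≠ 0 := by
      apply ne_of_gt
      apply Finset.prod_pos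
      intro j _
      have : (0:ℝ) ≤ (j:ℝ)*μ := by positivity
      linarith
    rw [Nat.factorial_succ]
    push_cast
    field_simp
    ring

lemma aux_nu_Iic {μ : ℝ} (hμ : 0 < μ) (l : ℕ) (hl : 1 ≤ l) (x : ℝ) :
    ((volume.restrict (Set.Ioi 0)).withDensity
      (fun y => ENNReal.ofReal ((l:ℝ)*μ*Real.exp (-(μ*y))*(1-Real.exp (-(μ*y)))^(l-1)))) (Set.Iic x)
    = ENNReal.ofReal ((if 0 ≤ x then 1 - Real.exp (-(μ*x)) else 0)^l) := by
  rw [withDensity_apply _ measurableSet_Iic, Measure.restrict_restrict measurableSet_Iic,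
    Set.Iic_inter_Ioi]
  rcases le_or_gt x 0 with hx | hx
  · rw [Set.Ioc_eq_empty (by simpa using hx), Measure.restrict_empty, lintegral_zero_measure]
    rcases eq_or_lt_of_le hx with hx0 | hx0
    · rw [hx0, if_pos le_rfl]
      simp [zero_pow (by omega : l ≠ 0)]
    · rw [if_neg (not_le.mpr hx0)]
      simp [zero_pow (by omega : l ≠ 0)]
  · have hcont : Continuous (fun y : ℝ => (l:ℝ)*μ*Real.exp (-(μ*y))*(1-Real.exp (-(μ*y)))^(l-1)) := by
      fun_prop
    have hint : IntegrableOn (fun y : ℝ => (l:ℝ)*μ*Real.exp (-(μ*y))*(1-Real.exp (-(μ*y)))^(l-1))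
        (Set.Ioc 0 x) := hcont.integrableOn_Ioc
    have hnn : 0 ≤ᵐ[volume.restrict (Set.Ioc 0 x)]
        (fun y : ℝ => (l:ℝ)*μ*Real.exp (-(μ*y))*(1-Real.exp (-(μ*y)))^(l-1)) := by
      filter_upwards [ae_restrict_mem measurableSet_Ioc] with y hy
      have h1 : Real.exp (-(μ*y)) ≤ 1 := Real.exp_le_one_iff.mpr (by nlinarith [hy.1])
      have h2 : (0:ℝ) ≤ 1 - Real.exp (-(μ*y)) := by linarith
      positivity
    rw [← ofReal_integral_eq_lintegral_ofReal hint hnn]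
    congr 1
    have hderiv : ∀ t ∈ Set.uIcc (0:ℝ) x,
        HasDerivAt (fun y : ℝ => (1 - Real.exp (-(μ*y)))^l)
          ((l:ℝ)*μ*Real.exp (-(μ*t))*(1-Real.exp (-(μ*t)))^(l-1)) t := by
      intro t _
      have h2 := ((aux_exp_hasDeriv μ t).const_sub 1).pow l
      refine h2.congr_deriv ?_
      ring
    have hii : IntervalIntegrable
        (fun y : ℝ => (l:ℝ)*μ*Real.exp (-(μ*y))*(1-Real.exp (-(μ*y)))^(l-1)) volume 0 x :=
      hcont.intervalIntegrable 0 x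
    have := intervalIntegral.integral_eq_sub_of_hasDerivAt hderiv hii
    rw [intervalIntegral.integral_of_le hx.le] at this
    rw [this, if_pos hx.le]
    simp [zero_pow (by omega : l ≠ 0)]

lemma aux_Icc_range {M : Type*} [CommMonoid M] (g : ℕ → M) (l : ℕ) :
    ∏ i ∈ Finset.Icc 1 l, g i = ∏ j ∈ Finset.range l, g (j+1) := by
  induction l with
  | zero => simp
  | succ n ih => rw [Finset.prod_Icc_succ_top (by omega), Finset.prod_range_succ, ih]

lemma aux_algebra {μ θ : ℝ} (hμ : 0 < μ) (hθ : 0 < θ) (hθμ : θ < μ) (l : ℕ) (hl : 1 ≤ l) :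
    (l:ℝ)*μ * ((((l-1).factorial : ℕ) : ℝ) * μ^(l-1) / ∏ j ∈ Finset.range l, ((μ-θ) + (j:ℝ)*μ))
      = ∏ i ∈ Finset.Icc 1 l, ((i:ℝ) * μ / ((i:ℝ) * μ - θ)) := by
  have hden : ∀ j ∈ Finset.range l, (0:ℝ) < ((j:ℝ)+1)*μ - θ := by
    intro j _
    have : (0:ℝ) ≤ (j:ℝ)*μ := by positivity
    nlinarith
  have hD : ∏ j ∈ Finset.range l, ((μ-θ) + (j:ℝ)*μ)
      = ∏ j ∈ Finset.range l, (((j:ℝ)+1)*μ - θ) := by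
    apply Finset.prod_congr rfl; intro j _; ring
  have hDpos : (0:ℝ) < ∏ j ∈ Finset.range l, (((j:ℝ)+1)*μ - θ) := Finset.prod_pos hden
  rw [aux_Icc_range (fun i => ((i:ℝ) * μ / ((i:ℝ) * μ - θ))) l, hD]
  have hR : (∏ j ∈ Finset.range l, (((j+1 : ℕ):ℝ) * μ / (((j+1 : ℕ):ℝ) * μ - θ)))
      = (∏ j ∈ Finset.range l, (((j:ℝ)+1) * μ)) / ∏ j ∈ Finset.range l, (((j:ℝ)+1)*μ - θ) := by
    rw [← Finset.prod_div_distrib]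
    apply Finset.prod_congr rfl
    intro j _
    push_cast
    ring_nf
  have hnum : (∏ j ∈ Finset.range l, (((j:ℝ)+1) * μ)) = (l.factorial : ℝ) * μ^l := by
    rw [Finset.prod_mul_distrib, Finset.prod_const, Finset.card_range]
    congr 1
    rw [← Finset.prod_range_add_one_eq_factorial l]
    push_cast
    rfl
  have h1 : (l:ℝ) * (((l-1).factorial : ℕ) : ℝ) = (l.factorial : ℝ) := by
    exact_mod_cast congrArg (Nat.cast : ℕ → ℝ) (Nat.mul_factorial_pred (by omega))
  have h2 : μ * μ^(l-1) = μ^l := by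
    rw [← pow_succ']
    congr 1
    omega
  rw [hR, hnum, ← mul_div_assoc]
  congr 1
  calc (l:ℝ)*μ * ((((l-1).factorial : ℕ) : ℝ) * μ^(l-1))
      = ((l:ℝ) * (((l-1).factorial : ℕ) : ℝ)) * (μ * μ^(l-1)) := by ring
    _ = (l.factorial:ℝ) * μ^l := by rw [h1, h2]

/-- for `Y₁,…,Y_l` i.i.d. `Exp(μ)` and `θ ∈ (0, μ)`,
`E[e^{θ·max_{i∈[1,l]} Y_i}] = ∏_{i=1}^{l} iμ/(iμ−θ)`. -/
theorem mgf_max_of_iid_exponentials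
    {Ω : Type*} [MeasurableSpace Ω] (P : Measure Ω) [IsProbabilityMeasure P]
    (l : ℕ) (hl : 1 ≤ l) (μ : ℝ) (hμ : 0 < μ)
    (Y : Fin l → Ω → ℝ)
    (hYmeas : ∀ i, Measurable (Y i))
    (hYlaw : ∀ i, Measure.map (Y i) P = expMeasure μ)
    (hindep : iIndepFun Y P)
    (θ : ℝ) (hθ : θ ∈ Set.Ioo 0 μ) :
    mgf (fun ω => ⨆ i, Y i ω) P θ
      = ∏ i ∈ Finset.Icc 1 l, ((i : ℝ) * μ / ((i : ℝ) * μ - θ)) := by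
  obtain ⟨hθ0, hθμ⟩ := hθ
  haveI : NeZero l := ⟨by omega⟩
  set M : Ω → ℝ := fun ω => ⨆ i, Y i ω with hMdef
  have hMsup : ∀ ω, M ω = Finset.univ.sup' Finset.univ_nonempty (fun i => Y i ω) :=
    fun ω => (Finset.sup'_univ_eq_ciSup (fun i => Y i ω)).symm
  have hM : Measurable M := by
    have h := Finset.measurable_sup' (Finset.univ_nonempty (α := Fin l))
      (fun i _ => hYmeas i)
    have heq : M = Finset.univ.sup' Finset.univ_nonempty Y := by
      funext ω
      rw [hMsup ω, Finset.sup'_apply]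
    rw [heq]
    exact h
  have hpre : ∀ x : ℝ, M ⁻¹' (Set.Iic x) = ⋂ i, Y i ⁻¹' (Set.Iic x) := by
    intro x; ext ω
    simp only [Set.mem_preimage, Set.mem_Iic, Set.mem_iInter]
    exact ciSup_le_iff (Set.Finite.bddAbove (Set.finite_range _))
  haveI : IsProbabilityMeasure (expMeasure μ) := isProbabilityMeasure_expMeasure hμ
  have hYIic : ∀ (i : Fin l) (x : ℝ), P (Y i ⁻¹' Set.Iic x)
      = ENNReal.ofReal (if 0 ≤ x then 1 - Real.exp (-(μ*x)) else 0) := by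
    intro i x
    rw [← Measure.map_apply (hYmeas i) measurableSet_Iic, hYlaw i, ← ofReal_cdf]
    congr 1
    exact cdf_expMeasure_eq hμ x
  have hmapIic : ∀ x : ℝ, Measure.map M P (Set.Iic x)
      = ENNReal.ofReal ((if 0 ≤ x then 1 - Real.exp (-(μ*x)) else 0)^l) := by
    intro x
    rw [Measure.map_apply hM measurableSet_Iic, hpre x,
      hindep.meas_iInter (fun i => ⟨Set.Iic x, measurableSet_Iic, rfl⟩)]
    have hFnn : (0:ℝ) ≤ (if 0 ≤ x then 1 - Real.exp (-(μ*x)) else 0) := by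
      split_ifs with h
      · have : Real.exp (-(μ*x)) ≤ 1 := Real.exp_le_one_iff.mpr (by nlinarith)
        linarith
      · exact le_rfl
    simp_rw [hYIic]
    rw [Finset.prod_const, Finset.card_univ, Fintype.card_fin, ← ENNReal.ofReal_pow hFnn]
  set ν : Measure ℝ := (volume.restrict (Set.Ioi 0)).withDensity
      (fun y => ENNReal.ofReal ((l:ℝ)*μ*Real.exp (-(μ*y))*(1-Real.exp (-(μ*y)))^(l-1))) with hνdef
  have hνmap : Measure.map M P = ν := by
    haveI : IsProbabilityMeasure (Measure.map M P) := Measure.isProbabilityMeasure_map hM.aemeasurable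
    refine Measure.ext_of_Iic _ _ (fun x => ?_)
    rw [hmapIic x, hνdef, aux_nu_Iic hμ l hl x]
  -- now compute the mgf
  have hmgf : mgf M P θ = ∫ x, Real.exp (θ * x) ∂(Measure.map M P) := by
    rw [mgf, integral_map hM.aemeasurable (Continuous.aestronglyMeasurable (by fun_prop))]
  rw [hmgf, hνmap, hνdef]
  have hdenscont : Continuous (fun y : ℝ => (l:ℝ)*μ*Real.exp (-(μ*y))*(1-Real.exp (-(μ*y)))^(l-1)) := by
    fun_prop
  have hfnn : Measurable (fun y : ℝ =>
      Real.toNNReal ((l:ℝ)*μ*Real.exp (-(μ*y))*(1-Real.exp (-(μ*y)))^(l-1))) :=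
    hdenscont.measurable.real_toNNReal
  rw [show (fun y : ℝ => ENNReal.ofReal ((l:ℝ)*μ*Real.exp (-(μ*y))*(1-Real.exp (-(μ*y)))^(l-1)))
      = (fun y : ℝ => ((Real.toNNReal ((l:ℝ)*μ*Real.exp (-(μ*y))*(1-Real.exp (-(μ*y)))^(l-1))) : ENNReal))
      from rfl]
  rw [integral_withDensity_eq_integral_smul hfnn]
  have hcongr : ∫ y in Set.Ioi (0:ℝ),
      Real.toNNReal ((l:ℝ)*μ*Real.exp (-(μ*y))*(1-Real.exp (-(μ*y)))^(l-1)) • Real.exp (θ * y)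
      = ∫ y in Set.Ioi (0:ℝ),
        ((l:ℝ)*μ) * (Real.exp (-((μ-θ)*y)) * (1-Real.exp (-(μ*y)))^(l-1)) := by
    apply setIntegral_congr_fun measurableSet_Ioi
    intro y hy
    have hy0 : (0:ℝ) < y := hy
    have h1 : Real.exp (-(μ*y)) ≤ 1 := Real.exp_le_one_iff.mpr (by nlinarith)
    have h2 : (0:ℝ) ≤ 1 - Real.exp (-(μ*y)) := by linarith
    have hdnn : (0:ℝ) ≤ (l:ℝ)*μ*Real.exp (-(μ*y))*(1-Real.exp (-(μ*y)))^(l-1) := by positivity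
    simp only [NNReal.smul_def]
    rw [Real.coe_toNNReal _ hdnn]
    rw [show -((μ-θ)*y) = -(μ*y) + θ*y by ring, Real.exp_add, smul_eq_mul]
    ring
  rw [hcongr, integral_const_mul, aux_Kval hμ (l-1) (μ-θ) (by linarith),
    show (l-1)+1 = l from by omega]
  exact aux_algebra hμ hθ0 hθμ l hl
end

section
/- Let l ≥ 1 and k ≥ 1 be natural numbers, μ > 0, and fix i ∈ [1, k]. Let (Z_j(n))_{j∈[1,k], n≥1} be i.i.d. exponential random variables with rate lμ, let (a_n)_{n≥2} be i.i.d. nonnegative random variables, all mutually independent, and suppose θ ∈ (0, lμ) satisfies (lμ/(lμ−θ))^k · E[e^{−θa₂}] ≤ 1. Define W(1) = 0 and W(n) = max{0, W(n−1) + Σ_{j=1}^{k} Z_j(n−1) − a_n} for n ≥ 2, and define the waiting time of task i of job n as W_i(n) = W(n) + Σ_{j=1}^{i−1} Z_j(n). Then for every n ≥ 1 and τ ≥ 0, P[W_i(n) ≥ τ] ≤ (lμ/(lμ−θ))^{i−1} · e^{−θτ}. -/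
open MeasureTheory ProbabilityTheory Real Finset
open scoped ENNReal NNReal

namespace TinyTasksAux

lemma lintegral_exp_expMeasure {r θ : ℝ} (hr : 0 < r) (hθ : θ < r) :
    ∫⁻ x, ENNReal.ofReal (Real.exp (θ * x)) ∂(expMeasure r)
      = ENNReal.ofReal (r / (r - θ)) := by
  have hb : 0 < r - θ := by linarith
  have hmeasφ : Measurable fun x : ℝ => ENNReal.ofReal (Real.exp (θ * x)) :=
    (Real.measurable_exp.comp (measurable_id.const_mul θ)).ennreal_ofReal
  have hpdfmeas : Measurable (exponentialPDF r) :=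
    (measurable_exponentialPDFReal r).ennreal_ofReal
  have h1 : expMeasure r = MeasureTheory.volume.withDensity (exponentialPDF r) := rfl
  rw [h1, lintegral_withDensity_eq_lintegral_mul _ hpdfmeas hmeasφ]
  have h2 : ∀ x : ℝ, (exponentialPDF r * fun x => ENNReal.ofReal (Real.exp (θ * x))) x
      = Set.indicator (Set.Ici 0) (fun x => ENNReal.ofReal (r * Real.exp (-((r - θ) * x)))) x := by
    intro x
    by_cases hx : 0 ≤ x
    · rw [Set.indicator_of_mem (Set.mem_Ici.mpr hx)]
      simp only [Pi.mul_apply, exponentialPDF_of_nonneg hx]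
      rw [← ENNReal.ofReal_mul (by positivity)]
      congr 1
      rw [mul_assoc, ← Real.exp_add]
      ring_nf
    · rw [Set.indicator_of_notMem (by simpa using hx)]
      simp only [Pi.mul_apply, exponentialPDF_of_neg (lt_of_not_ge hx), zero_mul]
  rw [lintegral_congr h2, lintegral_indicator measurableSet_Ici]
  have hint : IntegrableOn (fun x => r * Real.exp (-((r - θ) * x))) (Set.Ici 0) := by
    rw [integrableOn_Ici_iff_integrableOn_Ioi]
    exact (Integrable.const_mul ((exp_neg_integrableOn_Ioi 0 hb).congr (ae_of_all _ fun x => by norm_num; ring)) r)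
  rw [← ofReal_integral_eq_lintegral_ofReal hint (by filter_upwards with x; positivity)]
  congr 1
  rw [MeasureTheory.integral_Ici_eq_integral_Ioi]
  have : ∀ x : ℝ, Real.exp (-((r - θ) * x)) = (fun y => Real.exp (-y)) ((r - θ) * x) := fun x => rfl
  rw [MeasureTheory.integral_const_mul]
  rw [show (∫ x in Set.Ioi (0:ℝ), Real.exp (-((r - θ) * x)))
      = ∫ x in Set.Ioi (0:ℝ), (fun y => Real.exp (-y)) ((r - θ) * x) from rfl]
  rw [integral_comp_mul_left_Ioi (fun y => Real.exp (-y)) 0 hb]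
  simp only [mul_zero, integral_exp_neg_Ioi, neg_zero, Real.exp_zero, smul_eq_mul, mul_one]
  rw [div_eq_mul_inv]


lemma conv_bound {Ω : Type*} [MeasurableSpace Ω] (P : Measure Ω) [IsProbabilityMeasure P]
    (θ : ℝ) (U V : Ω → ℝ) (hU : Measurable U) (hV : Measurable V)
    (hUV : IndepFun U V P)
    (hbd : ∀ t : ℝ, P {ω | t ≤ U ω} ≤ ENNReal.ofReal (Real.exp (-θ * t))) (s : ℝ) :
    P {ω | s ≤ U ω + V ω} ≤
      ENNReal.ofReal (Real.exp (-θ * s)) * ∫⁻ ω, ENNReal.ofReal (Real.exp (θ * V ω)) ∂P := by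
  have hmap : P.map (fun ω => (U ω, V ω)) = (P.map U).prod (P.map V) :=
    (indepFun_iff_map_prod_eq_prod_map_map hU.aemeasurable hV.aemeasurable).mp hUV
  have hsm : MeasurableSet {p : ℝ × ℝ | s ≤ p.1 + p.2} :=
    measurableSet_le measurable_const (measurable_fst.add measurable_snd)
  have hPU : IsProbabilityMeasure (P.map U) := Measure.isProbabilityMeasure_map hU.aemeasurable
  have hPV : IsProbabilityMeasure (P.map V) := Measure.isProbabilityMeasure_map hV.aemeasurable
  have h1 : P {ω | s ≤ U ω + V ω}
      = ((P.map U).prod (P.map V)) {p : ℝ × ℝ | s ≤ p.1 + p.2} := by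
    rw [← hmap, Measure.map_apply (hU.prodMk hV) hsm]
    rfl
  rw [h1, Measure.prod_apply_symm hsm]
  have h2 : ∀ v : ℝ, (P.map U) ((fun u => (u, v)) ⁻¹' {p : ℝ × ℝ | s ≤ p.1 + p.2})
      ≤ ENNReal.ofReal (Real.exp (-θ * s)) * ENNReal.ofReal (Real.exp (θ * v)) := by
    intro v
    have hpre : ((fun u => (u, v)) ⁻¹' {p : ℝ × ℝ | s ≤ p.1 + p.2}) = Set.Ici (s - v) := by
      ext u
      simp only [Set.mem_preimage, Set.mem_setOf_eq, Set.mem_Ici]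
      constructor <;> intro h <;> linarith
    rw [hpre, Measure.map_apply hU measurableSet_Ici]
    have : (U ⁻¹' Set.Ici (s - v)) = {ω | s - v ≤ U ω} := rfl
    rw [this]
    refine le_trans (hbd (s - v)) ?_
    rw [← ENNReal.ofReal_mul (by positivity), ← Real.exp_add]
    apply ENNReal.ofReal_le_ofReal
    apply Real.exp_le_exp.mpr
    ring_nf
    exact le_rfl
  calc ∫⁻ v, (P.map U) ((fun u => (u, v)) ⁻¹' {p : ℝ × ℝ | s ≤ p.1 + p.2}) ∂(P.map V)
      ≤ ∫⁻ v, ENNReal.ofReal (Real.exp (-θ * s)) * ENNReal.ofReal (Real.exp (θ * v)) ∂(P.map V) :=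
        lintegral_mono h2
    _ = ENNReal.ofReal (Real.exp (-θ * s)) * ∫⁻ v, ENNReal.ofReal (Real.exp (θ * v)) ∂(P.map V) :=
        lintegral_const_mul _ ((Real.measurable_exp.comp (measurable_id.const_mul θ)).ennreal_ofReal)
    _ = ENNReal.ofReal (Real.exp (-θ * s)) * ∫⁻ ω, ENNReal.ofReal (Real.exp (θ * V ω)) ∂P := by
        congr 1
        exact lintegral_map ((by fun_prop : Measurable fun x : ℝ => Real.exp (θ * x)).ennreal_ofReal) hV

def Factors {Ω ι : Type*} [MeasurableSpace Ω] (f : ι → Ω → ℝ) (S : Finset ι) (U : Ω → ℝ) : Prop :=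
  ∃ g : (S → ℝ) → ℝ, Measurable g ∧ ∀ ω, U ω = g (fun i => f i ω)

variable {Ω ι : Type*} [MeasurableSpace Ω] {f : ι → Ω → ℝ} {S T : Finset ι} {U V : Ω → ℝ}

lemma Factors.measurable (hf : ∀ i, Measurable (f i)) (h : Factors f S U) : Measurable U := by
  obtain ⟨g, hg, hU⟩ := h
  have : U = g ∘ (fun ω (i : S) => f i ω) := funext hU
  rw [this]
  exact hg.comp (measurable_pi_lambda _ fun i => hf i)

lemma Factors.mono (hST : S ⊆ T) (h : Factors f S U) : Factors f T U := by
  obtain ⟨g, hg, hU⟩ := h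
  exact ⟨fun x => g (fun i => x ⟨i.1, hST i.2⟩),
    hg.comp (measurable_pi_lambda _ fun i => measurable_pi_apply _), fun ω => hU ω⟩

lemma factors_const (c : ℝ) : Factors f S (fun _ => c) :=
  ⟨fun _ => c, measurable_const, fun _ => rfl⟩

lemma factors_apply {i : ι} (hi : i ∈ S) : Factors f S (f i) :=
  ⟨fun x => x ⟨i, hi⟩, measurable_pi_apply _, fun _ => rfl⟩

lemma Factors.add (h1 : Factors f S U) (h2 : Factors f S V) :
    Factors f S (fun ω => U ω + V ω) := by
  obtain ⟨g1, hg1, hU⟩ := h1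
  obtain ⟨g2, hg2, hV⟩ := h2
  exact ⟨fun x => g1 x + g2 x, hg1.add hg2, fun ω => by dsimp only; rw [hU ω, hV ω]⟩

lemma Factors.sub (h1 : Factors f S U) (h2 : Factors f S V) :
    Factors f S (fun ω => U ω - V ω) := by
  obtain ⟨g1, hg1, hU⟩ := h1
  obtain ⟨g2, hg2, hV⟩ := h2
  exact ⟨fun x => g1 x - g2 x, hg1.sub hg2, fun ω => by dsimp only; rw [hU ω, hV ω]⟩

lemma Factors.max0 (h1 : Factors f S U) : Factors f S (fun ω => max 0 (U ω)) := by
  obtain ⟨g1, hg1, hU⟩ := h1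
  exact ⟨fun x => max 0 (g1 x), measurable_const.max hg1, fun ω => by dsimp only; rw [hU ω]⟩

lemma factors_sum {α : Type*} (F : Finset α) (u : α → Ω → ℝ)
    (h : ∀ j ∈ F, Factors f S (u j)) : Factors f S (fun ω => ∑ j ∈ F, u j ω) := by
  classical
  induction F using Finset.cons_induction with
  | empty => simpa using factors_const 0
  | cons j F hj ih =>
    simp only [Finset.sum_cons]
    exact (h j (Finset.mem_cons_self j F)).add
      (ih fun j' hj' => h j' (Finset.mem_cons_of_mem hj'))

lemma Factors.indepFun {P : Measure Ω} [IsProbabilityMeasure P]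
    (hindep : iIndepFun f P)
    (hf : ∀ i, Measurable (f i))
    (hU : Factors f S U) (hV : Factors f T V) (hST : Disjoint S T) :
    IndepFun U V P := by
  obtain ⟨g1, hg1, hU⟩ := hU
  obtain ⟨g2, hg2, hV⟩ := hV
  have h := (hindep.indepFun_finset S T hST hf).comp hg1 hg2
  have e1 : g1 ∘ (fun ω (i : S) => f i ω) = U := by funext ω; exact (hU ω).symm
  have e2 : g2 ∘ (fun ω (i : T) => f i ω) = V := by funext ω; exact (hV ω).symm
  rwa [e1, e2] at h

end TinyTasksAux


/-- waiting-time bound of the tiny-tasks single-queue fork-join model.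
The inter-start gaps `Z_j(n)` (`j ∈ [1,k]`, `n ≥ 1`) are i.i.d. `Exp(lμ)`, the
inter-arrival times `(a_n)_{n≥2}` are i.i.d. nonnegative, all mutually independent.
With `W(1)=0`, `W(n) = [W(n−1) + Σ_{j=1}^{k} Z_j(n−1) − a_n]₊` and the waiting time
of task `i` of job `n` given by `W_i(n) = W(n) + Σ_{j=1}^{i−1} Z_j(n)`, for any
`θ ∈ (0, lμ)` with `(lμ/(lμ−θ))^k·E[e^{−θa₂}] ≤ 1` we have
`P[W_i(n) ≥ τ] ≤ (lμ/(lμ−θ))^{i−1}·e^{−θτ}`. -/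
theorem tiny_tasks_fork_join_waiting_time_bound
    {Ω : Type*} [MeasurableSpace Ω] (P : Measure Ω) [IsProbabilityMeasure P]
    (l k : ℕ) (hl : 1 ≤ l) (hk : 1 ≤ k) (μ : ℝ) (hμ : 0 < μ)
    (i : ℕ) (hi1 : 1 ≤ i) (hik : i ≤ k)
    (Z : Fin k → ℕ → Ω → ℝ) (a : ℕ → Ω → ℝ)
    (hZmeas : ∀ j n, Measurable (Z j n)) (hameas : ∀ n, Measurable (a n))
    (hZlaw : ∀ j n, 1 ≤ n → Measure.map (Z j n) P = expMeasure (l * μ))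
    (hanonneg : ∀ n ω, 2 ≤ n → 0 ≤ a n ω)
    (haid : ∀ n, 2 ≤ n → Measure.map (a n) P = Measure.map (a 2) P)
    (hindep : iIndepFun
      (Sum.elim (fun p : Fin k × ℕ => Z p.1 p.2) a) P)
    (θ : ℝ) (hθ : θ ∈ Set.Ioo 0 (l * μ))
    (hstab : (l * μ / (l * μ - θ)) ^ k * mgf (a 2) P (-θ) ≤ 1)
    (W : ℕ → Ω → ℝ)
    (hW1 : ∀ ω, W 1 ω = 0)
    (hWn : ∀ n, 2 ≤ n → ∀ ω,
      W n ω = max 0 (W (n - 1) ω + (∑ j, Z j (n - 1) ω) - a n ω))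
    (Wi : ℕ → Ω → ℝ)
    (hWi : ∀ n ω, Wi n ω = W n ω +
      ∑ j ∈ Finset.univ.filter (fun j : Fin k => (j : ℕ) < i - 1), Z j n ω) :
    ∀ n, 1 ≤ n → ∀ τ : ℝ, 0 ≤ τ →
      P {ω | τ ≤ Wi n ω} ≤
        ENNReal.ofReal ((l * μ / (l * μ - θ)) ^ (i - 1) * Real.exp (-θ * τ)) := by
  classical
  obtain ⟨hθ0, hθr⟩ := hθ
  have hl0 : (0:ℝ) < l := by exact_mod_cast Nat.lt_of_lt_of_le Nat.zero_lt_one hl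
  have hr : (0:ℝ) < l * μ := mul_pos hl0 hμ
  set r : ℝ := (l:ℝ) * μ with hrdef
  set ρ : ℝ := r / (r - θ) with hρdef
  have hρ0 : 0 < ρ := div_pos hr (by linarith)
  set X : (Fin k × ℕ) ⊕ ℕ → Ω → ℝ := Sum.elim (fun p : Fin k × ℕ => Z p.1 p.2) a with hXdef
  have hindep' : iIndepFun X P := hindep
  have hXmeas : ∀ idx, Measurable (X idx) := by
    rintro (⟨j, m⟩ | m)
    · exact hZmeas j m
    · exact hameas m
  have hZX : ∀ (j : Fin k) (m : ℕ), Z j m = X (Sum.inl (j, m)) := fun j m => by rw [hXdef]; rfl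
  have haX : ∀ m : ℕ, a m = X (Sum.inr m) := fun m => by rw [hXdef]; rfl
  set pastF : ℕ → Finset ((Fin k × ℕ) ⊕ ℕ) := fun n =>
    ((Finset.univ ×ˢ Finset.range n).image Sum.inl) ∪ ((Finset.range (n+1)).image Sum.inr)
    with hpastF
  have hmemZp : ∀ (j : Fin k) (m n : ℕ), (Sum.inl (j, m) ∈ pastF n) ↔ m < n := by
    intro j m n
    simp [hpastF]
  have hmemAp : ∀ (m n : ℕ), (Sum.inr m ∈ pastF n) ↔ m < n + 1 := by
    intro m n
    simp [hpastF]
  have hpastmono : ∀ n : ℕ, pastF n ⊆ pastF (n+1) := by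
    intro n x hx
    rcases x with ⟨j, m⟩ | m
    · have := (hmemZp j m n).mp hx
      exact (hmemZp j m (n+1)).mpr (by omega)
    · have := (hmemAp m n).mp hx
      exact (hmemAp m (n+1)).mpr (by omega)
  have hφθ : Measurable fun x : ℝ => ENNReal.ofReal (Real.exp (θ * x)) :=
    (by fun_prop : Measurable fun x : ℝ => Real.exp (θ * x)).ennreal_ofReal
  have hφθ' : Measurable fun x : ℝ => ENNReal.ofReal (Real.exp (-θ * x)) :=
    (by fun_prop : Measurable fun x : ℝ => Real.exp (-θ * x)).ennreal_ofReal
  have hMeasSum : ∀ (n : ℕ) (F : Finset (Fin k)), Measurable fun ω => ∑ j ∈ F, Z j n ω :=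
    fun n F => Finset.measurable_sum _ fun j _ => hZmeas j n
  -- integral of e^{θ Z}
  have hone : ∀ (j : Fin k) (n : ℕ), 1 ≤ n →
      ∫⁻ ω, ENNReal.ofReal (Real.exp (θ * Z j n ω)) ∂P = ENNReal.ofReal ρ := by
    intro j n hn
    rw [← lintegral_map hφθ (hZmeas j n), hZlaw j n hn]
    exact TinyTasksAux.lintegral_exp_expMeasure hr hθr
  -- integral of e^{θ Σ_{j∈F} Z j n}
  have hsum : ∀ n : ℕ, 1 ≤ n → ∀ F : Finset (Fin k),
      ∫⁻ ω, ENNReal.ofReal (Real.exp (θ * ∑ j ∈ F, Z j n ω)) ∂P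
        = ENNReal.ofReal ρ ^ F.card := by
    intro n hn F
    induction F using Finset.cons_induction with
    | empty => simp
    | cons j F hj ih =>
      have hTdisj : Disjoint ({Sum.inl (j, n)} : Finset ((Fin k × ℕ) ⊕ ℕ))
          (F.image fun j' => Sum.inl (j', n)) := by
        simp only [Finset.disjoint_left, Finset.mem_singleton, Finset.mem_image]
        rintro x rfl ⟨j', hj', hx⟩
        simp only [Sum.inl.injEq, Prod.mk.injEq] at hx
        exact hj (hx.1 ▸ hj')
      have hIF : IndepFun (Z j n) (fun ω => ∑ j' ∈ F, Z j' n ω) P := by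
        refine TinyTasksAux.Factors.indepFun hindep' hXmeas ?_ ?_ hTdisj
        · rw [hZX j n]
          exact TinyTasksAux.factors_apply (Finset.mem_singleton_self _)
        · refine TinyTasksAux.factors_sum _ _ fun j' hj' => ?_
          rw [hZX j' n]
          exact TinyTasksAux.factors_apply (Finset.mem_image_of_mem _ hj')
      have hIF2 : IndepFun (fun ω => ENNReal.ofReal (Real.exp (θ * Z j n ω)))
          (fun ω => ENNReal.ofReal (Real.exp (θ * ∑ j' ∈ F, Z j' n ω))) P :=
        hIF.comp hφθ hφθ
      calc ∫⁻ ω, ENNReal.ofReal (Real.exp (θ * ∑ j' ∈ Finset.cons j F hj, Z j' n ω)) ∂P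
          = ∫⁻ ω, ((fun ω => ENNReal.ofReal (Real.exp (θ * Z j n ω)))
              * (fun ω => ENNReal.ofReal (Real.exp (θ * ∑ j' ∈ F, Z j' n ω)))) ω ∂P := by
            apply lintegral_congr
            intro ω
            simp only [Pi.mul_apply, Finset.sum_cons]
            rw [mul_add, Real.exp_add, ENNReal.ofReal_mul (by positivity)]
        _ = (∫⁻ ω, ENNReal.ofReal (Real.exp (θ * Z j n ω)) ∂P)
              * ∫⁻ ω, ENNReal.ofReal (Real.exp (θ * ∑ j' ∈ F, Z j' n ω)) ∂P :=
            lintegral_mul_eq_lintegral_mul_lintegral_of_indepFun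
              (hφθ.comp (hZmeas j n)) (hφθ.comp (hMeasSum n F)) hIF2
        _ = ENNReal.ofReal ρ ^ (Finset.cons j F hj).card := by
            rw [hone j n hn, ih, Finset.card_cons, pow_succ]
            ring
  -- integral of e^{-θ a m}
  have hA : ∀ m : ℕ, 2 ≤ m →
      ∫⁻ ω, ENNReal.ofReal (Real.exp (-θ * a m ω)) ∂P
        = ENNReal.ofReal (mgf (a 2) P (-θ)) := by
    intro m hm
    rw [← lintegral_map hφθ' (hameas m), haid m hm, lintegral_map hφθ' (hameas 2)]
    have hint : Integrable (fun ω => Real.exp (-θ * a 2 ω)) P := by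
      refine (integrable_const (1:ℝ)).mono'
        ((by fun_prop : Measurable fun ω => Real.exp (-θ * a 2 ω)).aestronglyMeasurable) ?_
      filter_upwards with ω
      rw [Real.norm_eq_abs, abs_of_pos (Real.exp_pos _)]
      refine Real.exp_le_one_iff.mpr ?_
      have := hanonneg 2 ω le_rfl
      nlinarith
    rw [← MeasureTheory.ofReal_integral_eq_lintegral_ofReal hint
      (by filter_upwards with ω; positivity)]
    rfl
  -- main induction: Factors + Kingman bound
  have hMain : ∀ n : ℕ, 1 ≤ n → TinyTasksAux.Factors X (pastF n) (W n) ∧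
      (∀ s : ℝ, P {ω | s ≤ W n ω} ≤ ENNReal.ofReal (Real.exp (-θ * s))) := by
    intro n hn
    induction n, hn using Nat.le_induction with
    | base =>
      constructor
      · exact ⟨fun _ => 0, measurable_const, fun ω => hW1 ω⟩
      · intro s
        rcases le_or_gt s 0 with hs | hs
        · refine le_trans prob_le_one ?_
          rw [show (1:ℝ≥0∞) = ENNReal.ofReal 1 by simp]
          exact ENNReal.ofReal_le_ofReal (Real.one_le_exp (by nlinarith))
        · have hempty : {ω | s ≤ W 1 ω} = ∅ := by
            ext ω
            simp only [Set.mem_setOf_eq, Set.mem_empty_iff_false, iff_false, not_le, hW1 ω]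
            exact hs
          simp [hempty]
    | succ n hn ih =>
      obtain ⟨ihF, ihB⟩ := ih
      have hWmeas : Measurable (W n) := ihF.measurable hXmeas
      have hWrec : ∀ ω, W (n+1) ω = max 0 (W n ω + ((∑ j, Z j n ω) - a (n+1) ω)) := by
        intro ω
        have h := hWn (n+1) (by omega) ω
        simpa [Nat.add_sub_cancel, add_sub_assoc] using h
      have hFS : TinyTasksAux.Factors X (pastF (n+1)) (fun ω => ∑ j, Z j n ω) := by
        refine TinyTasksAux.factors_sum _ _ fun j _ => ?_
        rw [hZX j n]
        exact TinyTasksAux.factors_apply ((hmemZp j n (n+1)).mpr (by omega))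
      have hFa : TinyTasksAux.Factors X (pastF (n+1)) (a (n+1)) := by
        rw [haX (n+1)]
        exact TinyTasksAux.factors_apply ((hmemAp (n+1) (n+1)).mpr (by omega))
      have hFW : TinyTasksAux.Factors X (pastF (n+1)) (W (n+1)) := by
        obtain ⟨g, hg, hgeq⟩ := ((ihF.mono (hpastmono n)).add (hFS.sub hFa)).max0
        exact ⟨g, hg, fun ω => by rw [hWrec ω]; exact hgeq ω⟩
      refine ⟨hFW, fun s => ?_⟩
      rcases le_or_gt s 0 with hs | hs
      · refine le_trans prob_le_one ?_
        rw [show (1:ℝ≥0∞) = ENNReal.ofReal 1 by simp]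
        exact ENNReal.ofReal_le_ofReal (Real.one_le_exp (by nlinarith))
      · have hVmeas : Measurable (fun ω => (∑ j, Z j n ω) - a (n+1) ω) :=
          (hMeasSum n Finset.univ).sub (hameas (n+1))
        have hsets : {ω | s ≤ W (n+1) ω}
            = {ω | s ≤ W n ω + ((∑ j, Z j n ω) - a (n+1) ω)} := by
          ext ω
          simp only [Set.mem_setOf_eq, hWrec ω, le_max_iff]
          constructor
          · rintro (h | h)
            · linarith
            · exact h
          · intro h
            right
            exact h
        have hdisj : Disjoint (pastF n)
            ((Finset.univ.image fun j : Fin k => (Sum.inl (j, n) : (Fin k × ℕ) ⊕ ℕ))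
              ∪ {Sum.inr (n+1)}) := by
          rw [Finset.disjoint_left]
          intro x hx hx'
          rcases x with ⟨jx, mx⟩ | mx
          · have h1 := (hmemZp jx mx n).mp hx
            simp only [Finset.mem_union, Finset.mem_image, Finset.mem_univ, true_and,
              Finset.mem_singleton, Sum.inl.injEq, Prod.mk.injEq, reduceCtorEq, or_false] at hx'
            obtain ⟨j', hj1, hj2⟩ := hx'
            omega
          · have h1 := (hmemAp mx n).mp hx
            simp only [Finset.mem_union, Finset.mem_image, Finset.mem_univ, true_and,
              Finset.mem_singleton, Sum.inr.injEq, reduceCtorEq, false_or,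
              exists_false, false_or] at hx'
            omega
        have hFdisjS : TinyTasksAux.Factors X
            ((Finset.univ.image fun j : Fin k => (Sum.inl (j, n) : (Fin k × ℕ) ⊕ ℕ))
              ∪ {Sum.inr (n+1)}) (fun ω => (∑ j, Z j n ω) - a (n+1) ω) := by
          refine TinyTasksAux.Factors.sub ?_ ?_
          · refine TinyTasksAux.factors_sum _ _ fun j _ => ?_
            rw [hZX j n]
            exact TinyTasksAux.factors_apply
              (Finset.mem_union_left _ (Finset.mem_image_of_mem _ (Finset.mem_univ j)))
          · rw [haX (n+1)]
            exact TinyTasksAux.factors_apply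
              (Finset.mem_union_right _ (Finset.mem_singleton_self _))
        have hind : IndepFun (W n) (fun ω => (∑ j, Z j n ω) - a (n+1) ω) P :=
          TinyTasksAux.Factors.indepFun hindep' hXmeas ihF hFdisjS hdisj
        have hM : ∫⁻ ω, ENNReal.ofReal (Real.exp (θ * ((∑ j, Z j n ω) - a (n+1) ω))) ∂P ≤ 1 := by
          have hfac : ∀ ω, ENNReal.ofReal (Real.exp (θ * ((∑ j, Z j n ω) - a (n+1) ω)))
              = ((fun ω => ENNReal.ofReal (Real.exp (θ * ∑ j, Z j n ω)))
                * (fun ω => ENNReal.ofReal (Real.exp (-θ * a (n+1) ω)))) ω := by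
            intro ω
            simp only [Pi.mul_apply]
            rw [← ENNReal.ofReal_mul (by positivity), ← Real.exp_add]
            congr 1
            ring
          have hdisj2 : Disjoint ((Finset.univ.image fun j : Fin k =>
              (Sum.inl (j, n) : (Fin k × ℕ) ⊕ ℕ))) ({Sum.inr (n+1)} : Finset _) := by
            rw [Finset.disjoint_left]
            intro x hx hx'
            simp only [Finset.mem_image, Finset.mem_univ, true_and] at hx
            obtain ⟨j', hj'⟩ := hx
            rw [Finset.mem_singleton, ← hj'] at hx'
            exact absurd hx' (by simp)
          have hind2 : IndepFun (fun ω => ∑ j, Z j n ω) (a (n+1)) P := by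
            refine TinyTasksAux.Factors.indepFun hindep' hXmeas ?_ ?_ hdisj2
            · refine TinyTasksAux.factors_sum _ _ fun j _ => ?_
              rw [hZX j n]
              exact TinyTasksAux.factors_apply (Finset.mem_image_of_mem _ (Finset.mem_univ j))
            · rw [haX (n+1)]
              exact TinyTasksAux.factors_apply (Finset.mem_singleton_self _)
          have hind3 : IndepFun (fun ω => ENNReal.ofReal (Real.exp (θ * ∑ j, Z j n ω)))
              (fun ω => ENNReal.ofReal (Real.exp (-θ * a (n+1) ω))) P :=
            hind2.comp hφθ hφθ'
          calc ∫⁻ ω, ENNReal.ofReal (Real.exp (θ * ((∑ j, Z j n ω) - a (n+1) ω))) ∂P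
              = ∫⁻ ω, ((fun ω => ENNReal.ofReal (Real.exp (θ * ∑ j, Z j n ω)))
                  * (fun ω => ENNReal.ofReal (Real.exp (-θ * a (n+1) ω)))) ω ∂P :=
                lintegral_congr hfac
            _ = (∫⁻ ω, ENNReal.ofReal (Real.exp (θ * ∑ j, Z j n ω)) ∂P)
                  * ∫⁻ ω, ENNReal.ofReal (Real.exp (-θ * a (n+1) ω)) ∂P :=
                lintegral_mul_eq_lintegral_mul_lintegral_of_indepFun
                  (hφθ.comp (hMeasSum n Finset.univ)) (hφθ'.comp (hameas (n+1))) hind3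
            _ = ENNReal.ofReal ρ ^ k * ENNReal.ofReal (mgf (a 2) P (-θ)) := by
                rw [hsum n hn Finset.univ, hA (n+1) (by omega)]
                simp
            _ ≤ 1 := by
                rw [← ENNReal.ofReal_pow hρ0.le,
                  ← ENNReal.ofReal_mul (by positivity)]
                calc ENNReal.ofReal (ρ ^ k * mgf (a 2) P (-θ))
                    ≤ ENNReal.ofReal 1 := ENNReal.ofReal_le_ofReal hstab
                  _ = 1 := by simp
        calc P {ω | s ≤ W (n+1) ω}
            = P {ω | s ≤ W n ω + ((∑ j, Z j n ω) - a (n+1) ω)} := by rw [hsets]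
          _ ≤ ENNReal.ofReal (Real.exp (-θ * s))
                * ∫⁻ ω, ENNReal.ofReal (Real.exp (θ * ((∑ j, Z j n ω) - a (n+1) ω))) ∂P :=
              TinyTasksAux.conv_bound P θ (W n) _ hWmeas hVmeas hind ihB s
          _ ≤ ENNReal.ofReal (Real.exp (-θ * s)) * 1 := by
              exact mul_le_mul_right hM _
          _ = ENNReal.ofReal (Real.exp (-θ * s)) := mul_one _
  -- conclusion
  intro n hn τ hτ
  obtain ⟨hFWn, hB⟩ := hMain n hn
  set F : Finset (Fin k) := Finset.univ.filter (fun j : Fin k => (j:ℕ) < i - 1) with hFdef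
  have hYmeas : Measurable fun ω => ∑ j ∈ F, Z j n ω := hMeasSum n F
  have hdisjF : Disjoint (pastF n) (F.image fun j => (Sum.inl (j, n) : (Fin k × ℕ) ⊕ ℕ)) := by
    rw [Finset.disjoint_left]
    intro x hx hx'
    rcases x with ⟨jx, mx⟩ | mx
    · have h1 := (hmemZp jx mx n).mp hx
      simp only [Finset.mem_image, Sum.inl.injEq, Prod.mk.injEq] at hx'
      obtain ⟨j', hj1, hj2, hj3⟩ := hx'
      omega
    · simp only [Finset.mem_image, reduceCtorEq, exists_false, and_false] at hx'
  have hindF : IndepFun (W n) (fun ω => ∑ j ∈ F, Z j n ω) P := by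
    refine TinyTasksAux.Factors.indepFun hindep' hXmeas hFWn ?_ hdisjF
    refine TinyTasksAux.factors_sum _ _ fun j hj => ?_
    rw [hZX j n]
    exact TinyTasksAux.factors_apply (Finset.mem_image_of_mem _ hj)
  have hsetWi : {ω | τ ≤ Wi n ω} = {ω | τ ≤ W n ω + ∑ j ∈ F, Z j n ω} := by
    ext ω
    simp only [Set.mem_setOf_eq, hWi n ω, hFdef]
  have hcard : F.card = i - 1 := by
    have h1 : i - 1 ≤ k := by omega
    have himg : F = Finset.univ.image (Fin.castLE h1) := by
      ext j
      simp only [hFdef, Finset.mem_filter, Finset.mem_univ, true_and, Finset.mem_image]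
      constructor
      · intro hj
        exact ⟨⟨(j:ℕ), hj⟩, Fin.ext rfl⟩
      · rintro ⟨j', _, rfl⟩
        exact j'.2
    rw [himg, Finset.card_image_of_injective _ (Fin.castLE_injective h1), Finset.card_univ]
    simp
  calc P {ω | τ ≤ Wi n ω}
      = P {ω | τ ≤ W n ω + ∑ j ∈ F, Z j n ω} := by rw [hsetWi]
    _ ≤ ENNReal.ofReal (Real.exp (-θ * τ))
          * ∫⁻ ω, ENNReal.ofReal (Real.exp (θ * ∑ j ∈ F, Z j n ω)) ∂P :=
        TinyTasksAux.conv_bound P θ (W n) _ (hFWn.measurable hXmeas) hYmeas hindF hB τ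
    _ = ENNReal.ofReal (Real.exp (-θ * τ)) * ENNReal.ofReal ρ ^ (i - 1) := by
        rw [hsum n hn F, hcard]
    _ = ENNReal.ofReal (ρ ^ (i - 1) * Real.exp (-θ * τ)) := by
        rw [← ENNReal.ofReal_pow hρ0.le, ← ENNReal.ofReal_mul (by positivity), mul_comm]
end
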